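/- arXiv:2312.15426 — 3 statements merged into one kernel-verified Lean document; each statement's English description precedes it below -/
import Mathlib

section
/- For every group access tree T over [n] there exists a leaf-oriented binary search tree R over [n] (obtained from T by replacing, at each internal group g, the edges to its children by an arbitrary binary search tree with leaves CG(g)) such that for every access sequence X = (x_1,…,x_m) ∈ [n]^m and every choice of initial preferred children of R, Σ_{t=1}^{m} γ_t ≤ Wilber1_R(X), where γ_t is the number of groups g on the search path T(x_t) whose parent lay on some earlier search path and for which g is not the last-accessed child of its parent at time t. -/
open scoped Classical

/-- A *group access tree* over `[n]` (keys modeled as `Fin n`): a hierarchical interval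
partition of the key space.  `grp i a` is the level-`i` group containing the key `a`. -/
structure GAT (n : ℕ) where
  depth : ℕ
  grp : ℕ → Fin n → Finset (Fin n)
  mem_grp : ∀ i a, a ∈ grp i a
  grp_root : ∀ a, grp 0 a = Finset.univ
  grp_leaf : ∀ i a, depth ≤ i → grp i a = {a}
  grp_eq : ∀ i a b, b ∈ grp i a → grp i b = grp i a
  grp_subset : ∀ i a, grp (i + 1) a ⊆ grp i a
  grp_interval : ∀ i a, ∃ lo hi : Fin n, grp i a = Finset.Icc lo hi

/-- The set of children (level-`(j+1)` groups) of the level-`j` group containing `a`. -/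
def GAT.children {n : ℕ} (T : GAT n) (j : ℕ) (a : Fin n) : Finset (Finset (Fin n)) :=
  (T.grp j a).image (fun b => T.grp (j + 1) b)

/-- The access cost of key `a` in the group access tree `T` with respect to a weight
function `w` (indexed by level and group):
`c(T,w,a) = ∑_{j=1}^{depth} log₂ (W^j / w(g_j(a)))`. -/
noncomputable def GAT.accessCost {n : ℕ} (T : GAT n) (w : ℕ → Finset (Fin n) → ℝ)
    (a : Fin n) : ℝ :=
  ∑ j ∈ Finset.range T.depth,
    Real.logb 2 (((T.children j a).sum (fun g => w (j + 1) g)) / w (j + 1) (T.grp (j + 1) a))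

/-- A family of weight functions (one per time step, indexed by level and group) is
*locally bounded* if the weight of a group may increase from time `t` to `t+1` only if the
group lies on the search path of `x t`. -/
def LocallyBounded {n m : ℕ} (T : GAT n) (x : Fin m → Fin n)
    (w : ℕ → ℕ → Finset (Fin n) → ℝ) : Prop :=
  ∀ (t : Fin m) (j : ℕ) (b : Fin n), T.grp j b ≠ T.grp j (x t) →
    w ((t : ℕ) + 1) j (T.grp j b) ≤ w (t : ℕ) j (T.grp j b)

/-- The group access bound `GAB(T, X)`: the infimum, over all locally bounded families of
positive weight functions, of the total access cost of the sequence `x`. -/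
noncomputable def GAB {n m : ℕ} (T : GAT n) (x : Fin m → Fin n) : ℝ :=
  sInf { c : ℝ | ∃ w : ℕ → ℕ → Finset (Fin n) → ℝ,
    (∀ t j g, 0 < w t j g) ∧ LocallyBounded T x w ∧
    c = ∑ t : Fin m, T.accessCost (w (t : ℕ)) (x t) }

/-- A leaf-oriented binary search tree over the keys `0, …, n-1`: every node is an interval
`[lo, hi]` of keys, and every internal node `[lo, hi]` (with `lo < hi`) is split into the two
children `[lo, split lo hi]` and `[split lo hi + 1, hi]`. -/
structure LeafBST (n : ℕ) where
  split : ℕ → ℕ → ℕ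
  le_split : ∀ lo hi, lo ≤ split lo hi
  split_lt : ∀ lo hi, lo < hi → split lo hi < hi

/-- The intervals `[lo, hi]` that occur as nodes of the leaf-oriented BST `R`. -/
inductive LeafBST.IsNode {n : ℕ} (R : LeafBST n) : ℕ → ℕ → Prop where
  | root : R.IsNode 0 (n - 1)
  | left {lo hi : ℕ} : R.IsNode lo hi → lo < hi → R.IsNode lo (R.split lo hi)
  | right {lo hi : ℕ} : R.IsNode lo hi → lo < hi → R.IsNode (R.split lo hi + 1) hi

/-- The preferred child of the node `[lo, hi]` of `R` after the first `c` accesses of `x`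
(`true` = left child): it is determined by the most recent access in `[lo, hi]`, and by the
arbitrary initial preference `init lo hi` if there was none. -/
noncomputable def LeafBST.pref {n m : ℕ} (R : LeafBST n) (init : ℕ → ℕ → Bool)
    (x : Fin m → Fin n) (lo hi c : ℕ) : Bool :=
  if h : (Finset.univ.filter (fun t' : Fin m =>
      (t' : ℕ) < c ∧ lo ≤ (x t' : ℕ) ∧ (x t' : ℕ) ≤ hi)).Nonempty then
    decide ((x ((Finset.univ.filter (fun t' : Fin m =>
      (t' : ℕ) < c ∧ lo ≤ (x t' : ℕ) ∧ (x t' : ℕ) ≤ hi)).max' h) : ℕ) ≤ R.split lo hi)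
  else init lo hi

/-- The first Wilber bound of the sequence `x` with respect to the reference tree `R` and the
initial preferred children `init`: the total number of preferred-child changes. -/
noncomputable def wilber1 {n m : ℕ} (R : LeafBST n) (init : ℕ → ℕ → Bool)
    (x : Fin m → Fin n) : ℕ :=
  ∑ t : Fin m,
    ((Finset.range n ×ˢ Finset.range n).filter (fun v : ℕ × ℕ =>
      R.IsNode v.1 v.2 ∧ v.1 < v.2 ∧
      R.pref init x v.1 v.2 ((t : ℕ) + 1) ≠ R.pref init x v.1 v.2 (t : ℕ))).card

/-- `γ_t`: the number of groups on the search path of `x t` in `T` whose parent lay on some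
earlier search path and which are not the last-accessed child of their parent at time `t`
(one candidate group per level `j ∈ {1, …, depth}`). -/
noncomputable def gammaT {n m : ℕ} (T : GAT n) (x : Fin m → Fin n) (t : Fin m) : ℕ :=
  ((Finset.Icc 1 T.depth).filter (fun j =>
    (∃ t' : Fin m, t' < t ∧ T.grp (j - 1) (x t') = T.grp (j - 1) (x t)) ∧
    ¬ (∃ t' : Fin m, t' < t ∧ T.grp j (x t') = T.grp j (x t) ∧
        ∀ t'' : Fin m, t' < t'' → t'' < t →
          T.grp (j - 1) (x t'') ≠ T.grp (j - 1) (x t')))).card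

namespace Stmt9Aux
variable {n : ℕ}
lemma grp_mono (T : GAT n) {i j : ℕ} (h : i ≤ j) (a : Fin n) : T.grp j a ⊆ T.grp i a := by
  induction j with
  | zero => have : i = 0 := Nat.le_zero.mp h; subst this; exact subset_rfl
  | succ j ih =>
    rcases Nat.lt_or_ge i (j+1) with h' | h'
    · exact (T.grp_subset j a).trans (ih (by omega))
    · have : i = j + 1 := by omega
      subst this; exact subset_rfl

lemma grp_eq_of_le (T : GAT n) {i j : ℕ} (h : i ≤ j) {a b : Fin n}
    (hab : T.grp j a = T.grp j b) : T.grp i a = T.grp i b := by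
  have hb : b ∈ T.grp i a := grp_mono T h a (hab ▸ T.mem_grp j b)
  exact (T.grp_eq i a b hb).symm

lemma grp_between (T : GAT n) (j : ℕ) {a b c : Fin n}
    (hab : T.grp j a = T.grp j b) (h1 : (a:ℕ) ≤ (c:ℕ)) (h2 : (c:ℕ) ≤ (b:ℕ)) :
    T.grp j c = T.grp j a := by
  obtain ⟨lo, hi, hIcc⟩ := T.grp_interval j a
  have ha := T.mem_grp j a
  have hb : b ∈ T.grp j a := hab ▸ T.mem_grp j b
  rw [hIcc, Finset.mem_Icc] at ha hb
  have hc : c ∈ T.grp j a := by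
    rw [hIcc, Finset.mem_Icc]
    refine ⟨le_trans ha.1 ?_, le_trans ?_ hb.2⟩
    · exact Fin.le_def.mpr h1
    · exact Fin.le_def.mpr h2
  exact T.grp_eq j a c hc

lemma lev_exists (T : GAT n) {s : ℕ} (h : s + 1 < n) :
    ∃ j, T.grp j ⟨s, by omega⟩ ≠ T.grp j ⟨s+1, h⟩ := by
  refine ⟨T.depth, ?_⟩
  rw [T.grp_leaf _ _ le_rfl, T.grp_leaf _ _ le_rfl]
  simp [Fin.ext_iff]

noncomputable def lev (T : GAT n) (s : ℕ) : ℕ :=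
  if h : s + 1 < n then Nat.find (lev_exists T h) else 0

lemma grp_eq_of_lt_lev (T : GAT n) {s : ℕ} (h : s + 1 < n) {l : ℕ} (hl : l < lev T s) :
    T.grp l ⟨s, by omega⟩ = T.grp l ⟨s+1, h⟩ := by
  rw [lev, dif_pos h] at hl
  have := Nat.find_min (lev_exists T h) hl
  simpa using this

lemma le_lev (T : GAT n) {s : ℕ} (h : s + 1 < n) {j : ℕ}
    (H : ∀ l, l < j → T.grp l ⟨s, by omega⟩ = T.grp l ⟨s+1, h⟩) : j ≤ lev T s := by
  rw [lev, dif_pos h]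
  exact (Nat.le_find_iff _ _).mpr (fun l hl => by simpa using H l hl)

noncomputable def splitF (T : GAT n) (lo hi : ℕ) : ℕ :=
  if h : lo < hi ∧ hi < n then
    ((Finset.Ico lo hi).filter (fun s => ∀ s' ∈ Finset.Ico lo hi, lev T s ≤ lev T s')).max'
      (by
        obtain ⟨s, hs, hmin⟩ := (Finset.Ico lo hi).exists_min_image (lev T)
          (by rw [Finset.nonempty_Ico]; exact h.1)
        exact ⟨s, Finset.mem_filter.mpr ⟨hs, hmin⟩⟩)
  else lo

lemma splitF_mem (T : GAT n) {lo hi : ℕ} (h1 : lo < hi) (h2 : hi < n) :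
    splitF T lo hi ∈ Finset.Ico lo hi ∧
      ∀ s' ∈ Finset.Ico lo hi, lev T (splitF T lo hi) ≤ lev T s' := by
  have : splitF T lo hi ∈ (Finset.Ico lo hi).filter
      (fun s => ∀ s' ∈ Finset.Ico lo hi, lev T s ≤ lev T s') := by
    rw [splitF, dif_pos (⟨h1, h2⟩ : lo < hi ∧ hi < n)]
    exact Finset.max'_mem _ _
  exact Finset.mem_filter.mp this

lemma le_splitF (T : GAT n) (lo hi : ℕ) : lo ≤ splitF T lo hi := by
  by_cases h : lo < hi ∧ hi < n
  · exact (Finset.mem_Ico.mp (splitF_mem T h.1 h.2).1).1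
  · rw [splitF, dif_neg h]

lemma splitF_lt (T : GAT n) (lo hi : ℕ) (h : lo < hi) : splitF T lo hi < hi := by
  by_cases h2 : hi < n
  · exact (Finset.mem_Ico.mp (splitF_mem T h h2).1).2
  · rw [splitF, dif_neg (by tauto)]; exact h

noncomputable def RT (T : GAT n) : LeafBST n :=
  ⟨splitF T, le_splitF T, splitF_lt T⟩

lemma isNode_bounds (T : GAT n) (hn : 1 ≤ n) {lo hi : ℕ} (h : (RT T).IsNode lo hi) :
    lo ≤ hi ∧ hi ≤ n - 1 := by
  induction h with
  | root => exact ⟨Nat.zero_le _, le_rfl⟩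
  | @left lo hi h hlt ih =>
    exact ⟨le_splitF T lo hi, le_trans (le_of_lt (splitF_lt T lo hi hlt)) ih.2⟩
  | @right lo hi h hlt ih =>
    exact ⟨splitF_lt T lo hi hlt, ih.2⟩

lemma grp_const_of_chain (T : GAT n) (l lo hi : ℕ)
    (H : ∀ s, lo ≤ s → s < hi → ∀ (h : s + 1 < n),
      T.grp l ⟨s, by omega⟩ = T.grp l ⟨s+1, h⟩) :
    ∀ k : ℕ, ∀ c c' : Fin n, lo ≤ (c:ℕ) → (c':ℕ) = (c:ℕ) + k → (c':ℕ) ≤ hi →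
      T.grp l c' = T.grp l c := by
  intro k
  induction k with
  | zero =>
    intro c c' _ h _
    have : c' = c := Fin.ext (by omega)
    rw [this]
  | succ k ih =>
    intro c c' hc h hhi'
    have hsn : (c:ℕ) + k + 1 < n := by have := c'.isLt; omega
    have hmid : T.grp l ⟨(c:ℕ)+k, by omega⟩ = T.grp l ⟨(c:ℕ)+k+1, hsn⟩ :=
      H _ (by omega) (by omega) hsn
    have h1 : T.grp l (⟨(c:ℕ)+k, by omega⟩ : Fin n) = T.grp l c :=
      ih c ⟨(c:ℕ)+k, by omega⟩ hc (by simp only [Fin.val_mk]) (by simp only [Fin.val_mk]; omega)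
    have h2 : c' = (⟨(c:ℕ)+k+1, hsn⟩ : Fin n) := Fin.ext (by simp only [Fin.val_mk]; omega)
    rw [h2, ← hmid, h1]

lemma grp_const (T : GAT n) (l lo hi : ℕ)
    (H : ∀ s, lo ≤ s → s < hi → ∀ (h : s + 1 < n),
      T.grp l ⟨s, by omega⟩ = T.grp l ⟨s+1, h⟩)
    {c c' : Fin n} (h1 : lo ≤ (c:ℕ)) (h2 : (c:ℕ) ≤ (c':ℕ)) (h3 : (c':ℕ) ≤ hi) :
    T.grp l c' = T.grp l c :=
  grp_const_of_chain T l lo hi H ((c':ℕ) - (c:ℕ)) c c' h1 (by omega) h3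

lemma key_prop (T : GAT n) {j : ℕ} (hj : 1 ≤ j) {a b : Fin n}
    (hab : T.grp (j-1) a = T.grp (j-1) b)
    {lo hi : ℕ} (hlohi : lo < hi) (hhin : hi < n)
    (hloa : lo ≤ (a:ℕ)) (hahi : (a:ℕ) ≤ hi) (hlob : lo ≤ (b:ℕ)) (hbhi : (b:ℕ) ≤ hi)
    (hA : (a:ℕ) ≤ splitF T lo hi) (hB : splitF T lo hi < (b:ℕ)) :
    ∀ c : Fin n, lo ≤ (c:ℕ) → (c:ℕ) ≤ hi → T.grp (j-1) c = T.grp (j-1) a := by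
  obtain ⟨hsmem, hsmin⟩ := splitF_mem T hlohi hhin
  rw [Finset.mem_Ico] at hsmem
  set s := splitF T lo hi with hsdef
  have hsn : s + 1 < n := by omega
  have hgs : T.grp (j-1) (⟨s, by omega⟩ : Fin n) = T.grp (j-1) a :=
    grp_between T _ hab (by simp only [Fin.val_mk]; omega) (by simp only [Fin.val_mk]; omega)
  have hgs1 : T.grp (j-1) (⟨s+1, hsn⟩ : Fin n) = T.grp (j-1) a :=
    grp_between T _ hab (by simp only [Fin.val_mk]; omega) (by simp only [Fin.val_mk]; omega)
  have hlev : j ≤ lev T s :=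
    le_lev T hsn (fun l hl => grp_eq_of_le T (by omega) (hgs.trans hgs1.symm))
  have Hchain : ∀ s', lo ≤ s' → s' < hi → ∀ (h : s' + 1 < n),
      T.grp (j-1) ⟨s', by omega⟩ = T.grp (j-1) ⟨s'+1, h⟩ := by
    intro s' h1 h2 h3
    have hl : j ≤ lev T s' := le_trans hlev (hsmin s' (Finset.mem_Ico.mpr ⟨h1, h2⟩))
    exact grp_eq_of_lt_lev T h3 (by omega)
  intro c hc1 hc2
  rcases le_total (c:ℕ) (a:ℕ) with h | h
  · exact (grp_const T (j-1) lo hi Hchain hc1 h hahi).symm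
  · exact grp_const T (j-1) lo hi Hchain hloa h hc2

lemma descent (T : GAT n) {j : ℕ} (hj : 1 ≤ j) {a b : Fin n}
    (hab : T.grp (j-1) a = T.grp (j-1) b) :
    ∀ d lo hi, hi - lo ≤ d → (RT T).IsNode lo hi → hi ≤ n - 1 →
      lo ≤ (a:ℕ) → (a:ℕ) ≤ hi → lo ≤ (b:ℕ) → (b:ℕ) ≤ hi →
      T.grp j a ≠ T.grp j b →
      ∃ lo' hi', (RT T).IsNode lo' hi' ∧ lo' < hi' ∧ hi' ≤ n - 1 ∧
        lo' ≤ (a:ℕ) ∧ (a:ℕ) ≤ hi' ∧ lo' ≤ (b:ℕ) ∧ (b:ℕ) ≤ hi' ∧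
        ¬((a:ℕ) ≤ splitF T lo' hi' ↔ (b:ℕ) ≤ splitF T lo' hi') ∧
        (∀ c : Fin n, lo' ≤ (c:ℕ) → (c:ℕ) ≤ hi' → T.grp (j-1) c = T.grp (j-1) a) := by
  intro d
  induction d with
  | zero =>
    intro lo hi hd _ _ hloa hahi hlob hbhi hne
    exfalso
    exact hne (by rw [(Fin.ext (by omega) : a = b)])
  | succ d ih =>
    intro lo hi hd hnode hhi hloa hahi hlob hbhi hne
    have hab' : a ≠ b := fun h => hne (by rw [h])
    have hlohi : lo < hi := by
      rcases Nat.lt_or_ge lo hi with h | h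
      · exact h
      · exact absurd (Fin.ext (by omega : (a:ℕ) = (b:ℕ))) hab'
    have hhin : hi < n := by omega
    have hsplit_lt : splitF T lo hi < hi := splitF_lt T lo hi hlohi
    have hle_split : lo ≤ splitF T lo hi := le_splitF T lo hi
    by_cases hA : (a:ℕ) ≤ splitF T lo hi
    · by_cases hB : (b:ℕ) ≤ splitF T lo hi
      · exact ih lo (splitF T lo hi) (by omega)
          (LeafBST.IsNode.left hnode hlohi) (by omega) hloa hA hlob hB hne
      · refine ⟨lo, hi, hnode, hlohi, hhi, hloa, hahi, hlob, hbhi,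
          fun hiff => hB (hiff.mp hA), ?_⟩
        exact key_prop T hj hab hlohi hhin hloa hahi hlob hbhi hA (by omega)
    · by_cases hB : (b:ℕ) ≤ splitF T lo hi
      · refine ⟨lo, hi, hnode, hlohi, hhi, hloa, hahi, hlob, hbhi,
          fun hiff => hA (hiff.mpr hB), ?_⟩
        intro c hc1 hc2
        have := key_prop T hj hab.symm hlohi hhin hlob hbhi hloa hahi hB (by omega) c hc1 hc2
        rw [this, hab]
      · exact ih (splitF T lo hi + 1) hi (by omega)
          (LeafBST.IsNode.right hnode hlohi) hhi (by omega) hahi (by omega) hbhi hne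
lemma main_ex (hn : 1 ≤ n) (T : GAT n) {m : ℕ} (x : Fin m → Fin n) (init : ℕ → ℕ → Bool)
    (t : Fin m) {j : ℕ}
    (hj : j ∈ (Finset.Icc 1 T.depth).filter (fun j =>
      (∃ t' : Fin m, t' < t ∧ T.grp (j - 1) (x t') = T.grp (j - 1) (x t)) ∧
      ¬ (∃ t' : Fin m, t' < t ∧ T.grp j (x t') = T.grp j (x t) ∧
          ∀ t'' : Fin m, t' < t'' → t'' < t →
            T.grp (j - 1) (x t'') ≠ T.grp (j - 1) (x t')))) :
    ∃ p : ℕ × ℕ,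
      (p ∈ (Finset.range n ×ˢ Finset.range n).filter (fun v : ℕ × ℕ =>
        (RT T).IsNode v.1 v.2 ∧ v.1 < v.2 ∧
        (RT T).pref init x v.1 v.2 ((t : ℕ) + 1) ≠ (RT T).pref init x v.1 v.2 (t : ℕ))) ∧
      (∀ c : Fin n, p.1 ≤ (c:ℕ) → (c:ℕ) ≤ p.2 → T.grp (j-1) c = T.grp (j-1) (x t)) ∧
      (∃ b : Fin n, p.1 ≤ (b:ℕ) ∧ (b:ℕ) ≤ p.2 ∧ T.grp j b ≠ T.grp j (x t)) := by
  classical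
  rw [Finset.mem_filter, Finset.mem_Icc] at hj
  obtain ⟨⟨hj1, hj2⟩, ⟨t0, ht0, hg0⟩, hnolast⟩ := hj
  set A := Finset.univ.filter (fun t1 : Fin m =>
    t1 < t ∧ T.grp (j-1) (x t1) = T.grp (j-1) (x t)) with hA
  have hAne : A.Nonempty := ⟨t0, Finset.mem_filter.mpr ⟨Finset.mem_univ _, ht0, hg0⟩⟩
  set t' := A.max' hAne with ht'def
  have ht'mem := Finset.max'_mem A hAne
  rw [Finset.mem_filter] at ht'mem
  obtain ⟨-, ht'lt, ht'g⟩ := ht'mem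
  have ht'max : ∀ t1 : Fin m, t1 < t → T.grp (j-1) (x t1) = T.grp (j-1) (x t) → t1 ≤ t' :=
    fun t1 h1 h2 => Finset.le_max' A t1 (Finset.mem_filter.mpr ⟨Finset.mem_univ _, h1, h2⟩)
  have hbne : T.grp j (x t') ≠ T.grp j (x t) := by
    intro heq
    refine hnolast ⟨t', ht'lt, heq, fun t'' h1 h2 hcon => ?_⟩
    exact absurd (ht'max t'' h2 (hcon.trans ht'g)) (not_le.mpr h1)
  have hroot : (RT T).IsNode 0 (n-1) := LeafBST.IsNode.root
  obtain ⟨lo, hi, hnode, hlohi, hhi, hloa, hahi, hlob, hbhi, hsplit, hconst⟩ :=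
    descent T hj1 ht'g.symm (n-1) 0 (n-1) le_rfl hroot le_rfl (Nat.zero_le _)
      (by have := (x t).isLt; omega) (Nat.zero_le _) (by have := (x t').isLt; omega)
      (fun h => hbne h.symm)
  refine ⟨(lo, hi), ?_, hconst, ⟨x t', hlob, hbhi, hbne⟩⟩
  rw [Finset.mem_filter, Finset.mem_product, Finset.mem_range, Finset.mem_range]
  refine ⟨⟨by omega, by omega⟩, hnode, hlohi, ?_⟩
  have hF1ne : (Finset.univ.filter (fun t1 : Fin m =>
      (t1 : ℕ) < (t:ℕ) + 1 ∧ lo ≤ (x t1 : ℕ) ∧ (x t1 : ℕ) ≤ hi)).Nonempty :=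
    ⟨t, Finset.mem_filter.mpr ⟨Finset.mem_univ _, by omega, hloa, hahi⟩⟩
  have hmax1 : (Finset.univ.filter (fun t1 : Fin m =>
      (t1 : ℕ) < (t:ℕ) + 1 ∧ lo ≤ (x t1 : ℕ) ∧ (x t1 : ℕ) ≤ hi)).max' hF1ne = t := by
    refine le_antisymm (Finset.max'_le _ _ _ (fun y hy => ?_)) (Finset.le_max' _ _
      (Finset.mem_filter.mpr ⟨Finset.mem_univ _, by omega, hloa, hahi⟩))
    rw [Finset.mem_filter] at hy
    obtain ⟨-, hy1, -, -⟩ := hy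
    exact Fin.le_def.mpr (by omega)
  have hF0ne : (Finset.univ.filter (fun t1 : Fin m =>
      (t1 : ℕ) < (t:ℕ) ∧ lo ≤ (x t1 : ℕ) ∧ (x t1 : ℕ) ≤ hi)).Nonempty :=
    ⟨t', Finset.mem_filter.mpr ⟨Finset.mem_univ _, Fin.lt_def.mp ht'lt, hlob, hbhi⟩⟩
  have hmax0 : (Finset.univ.filter (fun t1 : Fin m =>
      (t1 : ℕ) < (t:ℕ) ∧ lo ≤ (x t1 : ℕ) ∧ (x t1 : ℕ) ≤ hi)).max' hF0ne = t' := by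
    refine le_antisymm (Finset.max'_le _ _ _ (fun y hy => ?_)) (Finset.le_max' _ _
      (Finset.mem_filter.mpr ⟨Finset.mem_univ _, Fin.lt_def.mp ht'lt, hlob, hbhi⟩))
    rw [Finset.mem_filter] at hy
    obtain ⟨-, hy1, hy2, hy3⟩ := hy
    exact ht'max y (Fin.lt_def.mpr hy1) (hconst (x y) hy2 hy3)
  intro hpe
  simp only [LeafBST.pref] at hpe
  rw [dif_pos hF1ne, dif_pos hF0ne, hmax1, hmax0] at hpe
  exact hsplit (decide_eq_decide.mp hpe)

end Stmt9Aux

/-- For every group access tree `T` over `[n]` there exists a leaf-oriented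
binary search tree `R` over `[n]` such that for every access sequence `X ∈ [n]^m` and every
choice of initial preferred children of `R`, `∑_t γ_t ≤ Wilber1_R(X)`. -/
theorem stmt9 (n : ℕ) (hn : 1 ≤ n) (T : GAT n) :
    ∃ R : LeafBST n, ∀ (m : ℕ) (x : Fin m → Fin n) (init : ℕ → ℕ → Bool),
      (∑ t : Fin m, gammaT T x t) ≤ wilber1 R init x := by
  classical
  refine ⟨Stmt9Aux.RT T, fun m x init => ?_⟩
  rw [wilber1]
  refine Finset.sum_le_sum (fun t _ => ?_)
  rw [gammaT]
  set G := (Finset.Icc 1 T.depth).filter (fun j =>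
      (∃ t' : Fin m, t' < t ∧ T.grp (j - 1) (x t') = T.grp (j - 1) (x t)) ∧
      ¬ (∃ t' : Fin m, t' < t ∧ T.grp j (x t') = T.grp j (x t) ∧
          ∀ t'' : Fin m, t' < t'' → t'' < t →
            T.grp (j - 1) (x t'') ≠ T.grp (j - 1) (x t'))) with hG
  set St := (Finset.range n ×ˢ Finset.range n).filter (fun v : ℕ × ℕ =>
      (Stmt9Aux.RT T).IsNode v.1 v.2 ∧ v.1 < v.2 ∧
      (Stmt9Aux.RT T).pref init x v.1 v.2 ((t : ℕ) + 1) ≠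
        (Stmt9Aux.RT T).pref init x v.1 v.2 (t : ℕ)) with hSt
  have hEx' : ∀ j : ℕ, ∃ p : ℕ × ℕ, j ∈ G →
      (p ∈ St ∧
        (∀ c : Fin n, p.1 ≤ (c:ℕ) → (c:ℕ) ≤ p.2 → T.grp (j-1) c = T.grp (j-1) (x t)) ∧
        (∃ b : Fin n, p.1 ≤ (b:ℕ) ∧ (b:ℕ) ≤ p.2 ∧ T.grp j b ≠ T.grp j (x t))) := by
    intro j
    by_cases h : j ∈ G
    · obtain ⟨p, hp⟩ := Stmt9Aux.main_ex hn T x init t (hG ▸ h)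
      exact ⟨p, fun _ => ⟨hSt ▸ hp.1, hp.2⟩⟩
    · exact ⟨(0,0), fun h' => absurd h' h⟩
  choose f hf using hEx'
  have key : ∀ j1 j2 : ℕ, j1 ∈ G → j2 ∈ G → j1 < j2 → f j1 = f j2 → False := by
    intro j1 j2 h1 h2 hlt hfe
    obtain ⟨hm1, hconst1, b, hb1, hb2, hb3⟩ := hf j1 h1
    obtain ⟨hm2, hconst2, -⟩ := hf j2 h2
    refine hb3 ?_
    have h := hconst2 b (by rw [← hfe]; exact hb1) (by rw [← hfe]; exact hb2)
    exact Stmt9Aux.grp_eq_of_le T (by omega) h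
  refine Finset.card_le_card_of_injOn f (fun j hj => (hf j hj).1) ?_
  intro j1 hj1 j2 hj2 heq
  rcases lt_trichotomy j1 j2 with h | h | h
  · exact absurd heq (fun he => key j1 j2 hj1 hj2 h he)
  · exact h
  · exact absurd heq.symm (fun he => key j2 j1 hj2 hj1 h he)
end

section
/- There are universal constants c, C ≥ 1 such that the following holds for the randomized group access tree over [n]. Let X = (x_1,…,x_m) ∈ [n]^m, fix a time t ≥ 2 and a window size k ≥ 1, let UB^k(t) = min_{max(1,t−k) ≤ t' ≤ t−1} (t − t' + |x_t − x_{t'}| + 2), and let ub^k(t) = x_{t'} for a minimizing t'. If j is the largest integer with UB^k(t) ≤ c·n^{1/2^j} / log₂(n^{1/2^j}), then for every i ∈ {0, 1, …, j}, the probability (over the random shifts used to sample the tree) that x_t and ub^k(t) lie in different level-i groups is at most C / log₂(n^{1/2^i}). -/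
/-- The block size at level `j` of the randomized group access tree over `[n]`:
`2^{ℓ_j}` with `ℓ_j = (log₂ n)/2^j`. -/
def Lsz (n j : ℕ) : ℕ := 2 ^ (Nat.log 2 n / 2 ^ j)

/-- The random seed of the randomized group access tree over `[n]`: for every level
`j < log₂ n` and every possible left endpoint `a ≤ n` of a level-`j` group, the shift used
to split that group into its level-`(j+1)` children. -/
abbrev Seed (n : ℕ) := Fin (Nat.log 2 n) → Fin (n + 1) → Fin (n + 1)

/-- The finite sample space of the randomized group access tree: all seeds whose shift for a
level-`j` group lies in `{1, …, 2^{ℓ_{j+1}}}`; the tree is sampled by choosing each shift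
uniformly and independently, i.e. uniformly from this product set. -/
def seedSpace (n : ℕ) : Finset (Seed n) :=
  Finset.univ.filter (fun σ => ∀ (j : Fin (Nat.log 2 n)) (a : Fin (n + 1)),
    1 ≤ (σ j a : ℕ) ∧ (σ j a : ℕ) ≤ Lsz n ((j : ℕ) + 1))

/-- The left endpoint of the level-`i` group containing the key `y ∈ {1, …, n}` in the
randomized group access tree with seed `σ`: the root group is `(1, …, n)`, and a level-`i`
group with left endpoint `a` and shift `s = σ i a` is partitioned into the intervals
`(a, …, a+s-1), (a+s, …, a+s+L-1), …` of size `L = Lsz n (i+1)` (except possibly the first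
and the last).  Two keys lie in the same level-`i` group iff their level-`i` left endpoints
agree. -/
def leftEnd (n : ℕ) (σ : Seed n) : ℕ → ℕ → ℕ
  | 0, _ => 1
  | i + 1, y =>
    let a := leftEnd n σ i y
    if h : i < Nat.log 2 n then
      let s : ℕ := (σ ⟨i, h⟩ (if ha : a < n + 1 then ⟨a, ha⟩ else 0) : ℕ)
      if y < a + s then a
      else a + s + Lsz n (i + 1) * ((y - (a + s)) / Lsz n (i + 1))
    else a

/-- The minimized quantity in the unified bound with time window `k` at time `t` (0-indexed):
`min_{t' < t, t - t' ≤ k} (t - t' + |x_t - x_{t'}| + 2)`. -/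
noncomputable def ubkNat {m : ℕ} (k : ℕ) (x : Fin m → ℕ) (t : Fin m) : ℕ :=
  sInf { v : ℕ | ∃ t' : Fin m, t' < t ∧ (t : ℕ) ≤ (t' : ℕ) + k ∧
    v = ((t : ℕ) - (t' : ℕ)) + (max (x t) (x t') - min (x t) (x t')) + 2 }

lemma Lsz_pos (n j : ℕ) : 0 < Lsz n j := Nat.two_pow_pos _

lemma leftEnd_succ (n : ℕ) (σ : Seed n) {l : ℕ} (hl : l < Nat.log 2 n) (y : ℕ)
    (ha : leftEnd n σ l y < n + 1) :
    leftEnd n σ (l + 1) y =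
      if y < leftEnd n σ l y + (σ ⟨l, hl⟩ ⟨leftEnd n σ l y, ha⟩ : ℕ)
      then leftEnd n σ l y
      else leftEnd n σ l y + (σ ⟨l, hl⟩ ⟨leftEnd n σ l y, ha⟩ : ℕ) +
        Lsz n (l + 1) * ((y - (leftEnd n σ l y + (σ ⟨l, hl⟩ ⟨leftEnd n σ l y, ha⟩ : ℕ))) / Lsz n (l + 1)) := by
  rw [leftEnd, dif_pos hl]
  dsimp only
  rw [dif_pos ha]

lemma leftEnd_stop (n : ℕ) (σ : Seed n) {l : ℕ} (hl : ¬ l < Nat.log 2 n) (y : ℕ) :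
    leftEnd n σ (l + 1) y = leftEnd n σ l y := by
  rw [leftEnd, dif_neg hl]

lemma leftEnd_bounds (n : ℕ) (σ : Seed n) (i : ℕ) :
    ∀ y, 1 ≤ y → y ≤ n → 1 ≤ leftEnd n σ i y ∧ leftEnd n σ i y ≤ y := by
  induction i with
  | zero => intro y hy _; exact ⟨le_refl _, hy⟩
  | succ l ih =>
    intro y hy hyn
    obtain ⟨h1, h2⟩ := ih y hy hyn
    by_cases hl : l < Nat.log 2 n
    · have ha : leftEnd n σ l y < n + 1 := by omega
      rw [leftEnd_succ n σ hl y ha]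
      split
      · exact ⟨h1, h2⟩
      · next h =>
        push_neg at h
        refine ⟨by omega, ?_⟩
        have := Nat.div_mul_le_self (y - (leftEnd n σ l y + (σ ⟨l, hl⟩ ⟨leftEnd n σ l y, ha⟩ : ℕ))) (Lsz n (l + 1))
        have h2' := Nat.mul_div_le (y - (leftEnd n σ l y + (σ ⟨l, hl⟩ ⟨leftEnd n σ l y, ha⟩ : ℕ))) (Lsz n (l + 1))
        omega
    · rw [leftEnd_stop n σ hl y]; exact ⟨h1, h2⟩

lemma leftEnd_congr (n : ℕ) (σ τ : Seed n) (l : ℕ)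
    (h : ∀ j : Fin (Nat.log 2 n), (j : ℕ) < l → σ j = τ j) (y : ℕ) :
    leftEnd n σ l y = leftEnd n τ l y := by
  induction l with
  | zero => rfl
  | succ l ih =>
    have hih : leftEnd n σ l y = leftEnd n τ l y :=
      ih (fun j hj => h j (by omega))
    rw [leftEnd, leftEnd, hih]
    split
    · next hl =>
      rw [h ⟨l, hl⟩ (Nat.lt_succ_self l)]
    · rfl

def upd (n : ℕ) (σ : Seed n) (j : Fin (Nat.log 2 n)) (a : Fin (n + 1)) (v : Fin (n + 1)) :
    Seed n :=
  fun j' a' => if j' = j ∧ a' = a then v else σ j' a'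

lemma upd_same (n : ℕ) (σ : Seed n) (j : Fin (Nat.log 2 n)) (a v : Fin (n + 1)) :
    upd n σ j a v j a = v := by simp [upd]

lemma upd_other (n : ℕ) (σ : Seed n) (j : Fin (Nat.log 2 n)) (a v : Fin (n + 1))
    (j' : Fin (Nat.log 2 n)) (a' : Fin (n + 1)) (h : ¬ (j' = j ∧ a' = a)) :
    upd n σ j a v j' a' = σ j' a' := by simp [upd, h]

lemma leftEnd_upd (n : ℕ) (σ : Seed n) {l : ℕ} (hl : l < Nat.log 2 n)
    (a v : Fin (n + 1)) (y : ℕ) :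
    leftEnd n (upd n σ ⟨l, hl⟩ a v) l y = leftEnd n σ l y := by
  apply leftEnd_congr
  intro j hj
  funext a'
  apply upd_other
  rintro ⟨rfl, -⟩
  exact absurd hj (by simp)

lemma mod_inj_Icc {L s₁ s₂ : ℕ} (h₁ : 1 ≤ s₁) (h₁' : s₁ ≤ L) (h₂ : 1 ≤ s₂) (h₂' : s₂ ≤ L)
    (h : s₁ % L = s₂ % L) : s₁ = s₂ := by
  rcases eq_or_lt_of_le h₁' with rfl | hlt₁
  · rcases eq_or_lt_of_le h₂' with rfl | hlt₂
    · rfl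
    · rw [Nat.mod_self, Nat.mod_eq_of_lt hlt₂] at h; omega
  · rcases eq_or_lt_of_le h₂' with rfl | hlt₂
    · rw [Nat.mod_self, Nat.mod_eq_of_lt hlt₁] at h; omega
    · rwa [Nat.mod_eq_of_lt hlt₁, Nat.mod_eq_of_lt hlt₂] at h

lemma key_count (n : ℕ) (hn : 1 ≤ n) (y z : ℕ) (hy : 1 ≤ y) (hyz : y < z) (hz : z ≤ n)
    (l : ℕ) :
    ((seedSpace n).filter (fun σ => leftEnd n σ l y = leftEnd n σ l z ∧
        leftEnd n σ (l + 1) y ≠ leftEnd n σ (l + 1) z)).card * Lsz n (l + 1)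
      ≤ (z - y) * (seedSpace n).card := by
  classical
  by_cases hl : l < Nat.log 2 n
  swap
  · have : ((seedSpace n).filter (fun σ => leftEnd n σ l y = leftEnd n σ l z ∧
        leftEnd n σ (l + 1) y ≠ leftEnd n σ (l + 1) z)) = ∅ := by
      apply Finset.filter_false_of_mem
      intro σ _
      rw [leftEnd_stop n σ hl, leftEnd_stop n σ hl]
      tauto
    simp [this]
  set K := Nat.log 2 n with hK
  set L := Lsz n (l + 1) with hLdef
  have hL1 : 1 ≤ L := Lsz_pos n (l + 1)
  have hLn : L ≤ n := by
    have h1 : L ≤ 2 ^ K := by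
      rw [hLdef]
      exact Nat.pow_le_pow_right (by norm_num) (Nat.div_le_self _ _)
    exact h1.trans (Nat.pow_log_le_self 2 (by omega))
  set D := ((seedSpace n).filter (fun σ => leftEnd n σ l y = leftEnd n σ l z ∧
        leftEnd n σ (l + 1) y ≠ leftEnd n σ (l + 1) z)) with hD
  have hya : ∀ σ : Seed n, leftEnd n σ l y < n + 1 := by
    intro σ; have := leftEnd_bounds n σ l y hy (by omega); omega
  let lvl : Fin K := ⟨l, hl⟩
  let pos : Seed n → Fin (n + 1) := fun σ => ⟨leftEnd n σ l y, hya σ⟩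
  let shf : Seed n → ℕ := fun σ => (σ lvl (pos σ) : ℕ)
  let wit : Seed n → ℕ := fun σ =>
    if y < leftEnd n σ l y + shf σ then leftEnd n σ l y + shf σ
    else leftEnd n σ l y + shf σ + L * ((y - (leftEnd n σ l y + shf σ)) / L + 1)
  let f : Seed n × ℕ → Seed n × ℕ := fun p =>
    (upd n p.1 lvl (pos p.1) (if h : p.2 < n + 1 then ⟨p.2, h⟩ else 0), wit p.1)
  have hcard : (D ×ˢ Finset.Icc 1 L).card ≤ ((seedSpace n) ×ˢ Finset.Ioc y z).card := by
    apply Finset.card_le_card_of_injOn f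
    · -- maps to
      rintro ⟨σ, r⟩ hp
      rw [Finset.mem_coe, Finset.mem_product] at hp
      obtain ⟨hσD, hr⟩ := hp
      rw [Finset.mem_Icc] at hr
      simp only [] at hr
      rw [hD, Finset.mem_filter] at hσD
      obtain ⟨hσS, hEq0, hNe0⟩ := hσD
      have hEq : leftEnd n σ l y = leftEnd n σ l z := hEq0
      have hNe : leftEnd n σ (l + 1) y ≠ leftEnd n σ (l + 1) z := hNe0
      have hσprop : ∀ (j : Fin K) (a : Fin (n + 1)),
          1 ≤ (σ j a : ℕ) ∧ (σ j a : ℕ) ≤ Lsz n ((j : ℕ) + 1) :=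
        (Finset.mem_filter.mp hσS).2
      rw [Finset.mem_coe, Finset.mem_product]
      constructor
      · rw [seedSpace, Finset.mem_filter]
        refine ⟨Finset.mem_univ _, ?_⟩
        intro j' a'
        show 1 ≤ (upd n σ lvl (pos σ) (if h : r < n + 1 then ⟨r, h⟩ else 0) j' a' : ℕ) ∧
          (upd n σ lvl (pos σ) (if h : r < n + 1 then ⟨r, h⟩ else 0) j' a' : ℕ)
            ≤ Lsz n ((j' : ℕ) + 1)
        by_cases hc : j' = lvl ∧ a' = pos σ
        · obtain ⟨rfl, rfl⟩ := hc
          rw [upd_same]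
          have hrn : r < n + 1 := by omega
          rw [dif_pos hrn]
          exact ⟨hr.1, hr.2⟩
        · rw [upd_other _ _ _ _ _ _ _ hc]
          exact hσprop j' a'
      · show wit σ ∈ Finset.Ioc y z
        rw [Finset.mem_Ioc]
        have hza : leftEnd n σ l z < n + 1 := by
          have := leftEnd_bounds n σ l z (by omega) hz; omega
        have hsy : leftEnd n σ (l + 1) y =
            if y < leftEnd n σ l y + shf σ then leftEnd n σ l y
            else leftEnd n σ l y + shf σ + L * ((y - (leftEnd n σ l y + shf σ)) / L) :=
          leftEnd_succ n σ hl y (hya σ)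
        have hsz : leftEnd n σ (l + 1) z =
            if z < leftEnd n σ l y + shf σ then leftEnd n σ l y
            else leftEnd n σ l y + shf σ + L * ((z - (leftEnd n σ l y + shf σ)) / L) := by
          have h0 := leftEnd_succ n σ hl z hza
          have hposz : (⟨leftEnd n σ l z, hza⟩ : Fin (n + 1)) = pos σ := by
            apply Fin.ext
            simp only [pos, ← hEq]
          rw [h0, hposz, ← hEq]
        have hs1 : 1 ≤ shf σ := (hσprop lvl (pos σ)).1
        have hsL : shf σ ≤ L := (hσprop lvl (pos σ)).2
        by_cases hcase : y < leftEnd n σ l y + shf σ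
        · have hwit : wit σ = leftEnd n σ l y + shf σ := if_pos hcase
          rw [hwit]
          refine ⟨hcase, ?_⟩
          by_contra hzc
          push_neg at hzc
          apply hNe
          rw [hsy, hsz, if_pos hcase, if_pos hzc]
        · push_neg at hcase
          have hwit : wit σ = leftEnd n σ l y + shf σ +
              L * ((y - (leftEnd n σ l y + shf σ)) / L + 1) := if_neg (by omega)
          rw [hwit]
          have hzc : ¬ z < leftEnd n σ l y + shf σ := by omega
          have hdm := Nat.div_add_mod (y - (leftEnd n σ l y + shf σ)) L
          have hmlt : (y - (leftEnd n σ l y + shf σ)) % L < L := Nat.mod_lt _ (by omega)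
          constructor
          · -- y < wit
            have : L * ((y - (leftEnd n σ l y + shf σ)) / L + 1)
                = L * ((y - (leftEnd n σ l y + shf σ)) / L) + L := by ring
            omega
          · -- wit ≤ z
            have hqle : (y - (leftEnd n σ l y + shf σ)) / L
                ≤ (z - (leftEnd n σ l y + shf σ)) / L :=
              Nat.div_le_div_right (by omega)
            have hqne : (y - (leftEnd n σ l y + shf σ)) / L
                ≠ (z - (leftEnd n σ l y + shf σ)) / L := by
              intro hq
              apply hNe
              rw [hsy, hsz, if_neg (by omega), if_neg (by omega), hq]
            have h2 : ((y - (leftEnd n σ l y + shf σ)) / L + 1) * L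
                ≤ ((z - (leftEnd n σ l y + shf σ)) / L) * L :=
              Nat.mul_le_mul_right _ (by omega)
            have h3 : ((z - (leftEnd n σ l y + shf σ)) / L) * L
                ≤ z - (leftEnd n σ l y + shf σ) := Nat.div_mul_le_self _ _
            have h4 : L * ((y - (leftEnd n σ l y + shf σ)) / L + 1)
                ≤ z - (leftEnd n σ l y + shf σ) := by
              rw [mul_comm]; exact h2.trans h3
            omega
    · -- injectivity
      rintro ⟨σ₁, r₁⟩ hp₁ ⟨σ₂, r₂⟩ hp₂ hfe
      simp only [Finset.coe_product, Set.mem_prod, Finset.mem_coe] at hp₁ hp₂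
      obtain ⟨h₁D, h₁r⟩ := hp₁
      obtain ⟨h₂D, h₂r⟩ := hp₂
      rw [Finset.mem_Icc] at h₁r h₂r
      rw [hD, Finset.mem_filter] at h₁D h₂D
      obtain ⟨h₁S, h₁Eq, -⟩ := h₁D
      obtain ⟨h₂S, h₂Eq, -⟩ := h₂D
      have h₁prop : ∀ (j : Fin K) (a : Fin (n + 1)),
          1 ≤ (σ₁ j a : ℕ) ∧ (σ₁ j a : ℕ) ≤ Lsz n ((j : ℕ) + 1) :=
        (Finset.mem_filter.mp h₁S).2
      have h₂prop : ∀ (j : Fin K) (a : Fin (n + 1)),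
          1 ≤ (σ₂ j a : ℕ) ∧ (σ₂ j a : ℕ) ≤ Lsz n ((j : ℕ) + 1) :=
        (Finset.mem_filter.mp h₂S).2
      have hτ : upd n σ₁ lvl (pos σ₁) (if h : r₁ < n + 1 then ⟨r₁, h⟩ else 0)
          = upd n σ₂ lvl (pos σ₂) (if h : r₂ < n + 1 then ⟨r₂, h⟩ else 0) :=
        congrArg Prod.fst hfe
      have hw : wit σ₁ = wit σ₂ := congrArg Prod.snd hfe
      have ha12 : leftEnd n σ₁ l y = leftEnd n σ₂ l y := by
        have e1 : leftEnd n (upd n σ₁ lvl (pos σ₁)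
            (if h : r₁ < n + 1 then ⟨r₁, h⟩ else 0)) l y = leftEnd n σ₁ l y :=
          leftEnd_upd n σ₁ hl _ _ y
        have e2 : leftEnd n (upd n σ₂ lvl (pos σ₂)
            (if h : r₂ < n + 1 then ⟨r₂, h⟩ else 0)) l y = leftEnd n σ₂ l y :=
          leftEnd_upd n σ₂ hl _ _ y
        rw [← e1, ← e2, hτ]
      have hpos12 : pos σ₁ = pos σ₂ := by
        apply Fin.ext
        simp only [pos, ha12]
      have hs1b : 1 ≤ shf σ₁ ∧ shf σ₁ ≤ L := h₁prop lvl (pos σ₁)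
      have hs2b : 1 ≤ shf σ₂ ∧ shf σ₂ ≤ L := h₂prop lvl (pos σ₂)
      have hwmod : ∀ σ : Seed n, wit σ % L = (leftEnd n σ l y + shf σ) % L := by
        intro σ
        show (if y < leftEnd n σ l y + shf σ then _ else _) % L = _
        split
        · rfl
        · rw [Nat.add_mul_mod_self_left]
      have hmod12 : (leftEnd n σ₂ l y + shf σ₁) % L = (leftEnd n σ₂ l y + shf σ₂) % L := by
        have h1 : (leftEnd n σ₁ l y + shf σ₁) % L = (leftEnd n σ₂ l y + shf σ₂) % L := by
          rw [← hwmod, ← hwmod, hw]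
        rwa [ha12] at h1
      have hshf12 : shf σ₁ = shf σ₂ :=
        mod_inj_Icc hs1b.1 hs1b.2 hs2b.1 hs2b.2
          (Nat.ModEq.add_left_cancel' _ hmod12)
      rw [hpos12] at hτ
      have hr12 : r₁ = r₂ := by
        have e := congrFun (congrFun hτ lvl) (pos σ₂)
        rw [upd_same, upd_same] at e
        have hr1n : r₁ < n + 1 := by omega
        have hr2n : r₂ < n + 1 := by omega
        rw [dif_pos hr1n, dif_pos hr2n] at e
        exact Fin.mk.inj_iff.mp e
      have hσ12 : σ₁ = σ₂ := by
        funext j' a'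
        by_cases hc : j' = lvl ∧ a' = pos σ₂
        · obtain ⟨rfl, rfl⟩ := hc
          apply Fin.val_injective
          have h' : (σ₁ lvl (pos σ₁) : ℕ) = (σ₂ lvl (pos σ₂) : ℕ) := hshf12
          rwa [hpos12] at h'
        · have e1 := upd_other n σ₁ lvl (pos σ₂) (if h : r₁ < n + 1 then ⟨r₁, h⟩ else 0) j' a' hc
          have e2 := upd_other n σ₂ lvl (pos σ₂) (if h : r₂ < n + 1 then ⟨r₂, h⟩ else 0) j' a' hc
          rw [← e1, ← e2, hτ]
      rw [Prod.ext_iff]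
      exact ⟨hσ12, hr12⟩
  rw [Finset.card_product, Finset.card_product, Nat.card_Icc, Nat.card_Ioc] at hcard
  have hLL : L + 1 - 1 = L := by omega
  rw [hLL, mul_comm (seedSpace n).card] at hcard
  exact hcard

lemma cardE_le_sum (n : ℕ) (y z : ℕ) (i : ℕ) :
    ((seedSpace n).filter (fun σ => leftEnd n σ i y ≠ leftEnd n σ i z)).card
      ≤ ∑ l ∈ Finset.range i,
        ((seedSpace n).filter (fun σ => leftEnd n σ l y = leftEnd n σ l z ∧
          leftEnd n σ (l + 1) y ≠ leftEnd n σ (l + 1) z)).card := by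
  induction i with
  | zero =>
    have : ((seedSpace n).filter
        (fun σ => leftEnd n σ 0 y ≠ leftEnd n σ 0 z)) = ∅ := by
      apply Finset.filter_false_of_mem
      intro σ _
      show ¬ (1 : ℕ) ≠ 1
      simp
    simp [this]
  | succ i ih =>
    rw [Finset.sum_range_succ]
    have hsub : (seedSpace n).filter (fun σ => leftEnd n σ (i+1) y ≠ leftEnd n σ (i+1) z)
        ⊆ ((seedSpace n).filter (fun σ => leftEnd n σ i y ≠ leftEnd n σ i z)) ∪
          ((seedSpace n).filter (fun σ => leftEnd n σ i y = leftEnd n σ i z ∧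
            leftEnd n σ (i+1) y ≠ leftEnd n σ (i+1) z)) := by
      intro σ hσ
      rw [Finset.mem_filter] at hσ
      rw [Finset.mem_union, Finset.mem_filter, Finset.mem_filter]
      by_cases h : leftEnd n σ i y = leftEnd n σ i z
      · exact Or.inr ⟨hσ.1, h, hσ.2⟩
      · exact Or.inl ⟨hσ.1, h⟩
    have h1 := Finset.card_le_card hsub
    have h2 := Finset.card_union_le
      ((seedSpace n).filter (fun σ => leftEnd n σ i y ≠ leftEnd n σ i z))
      ((seedSpace n).filter (fun σ => leftEnd n σ i y = leftEnd n σ i z ∧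
        leftEnd n σ (i+1) y ≠ leftEnd n σ (i+1) z))
    omega

lemma log_div_ge (K : ℕ) (a m : ℕ) : 1 ≤ K / 2 ^ (a + m) → K / 2 ^ (a + m) + m ≤ K / 2 ^ a := by
  induction m with
  | zero => intro _; simp
  | succ m ih =>
    intro h
    have hexp : a + (m + 1) = (a + m) + 1 := by omega
    rw [hexp] at h ⊢
    have hdd : K / 2 ^ ((a + m) + 1) = K / 2 ^ (a + m) / 2 := by
      rw [Nat.div_div_eq_div_mul, pow_succ]
    have hstep : 2 * (K / 2 ^ ((a + m) + 1)) ≤ K / 2 ^ (a + m) := by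
      rw [hdd]; omega
    have h' : 1 ≤ K / 2 ^ (a + m) := by omega
    have := ih h'
    omega

lemma Lsz_ge (n i l : ℕ) (hl : l < i) (hq : 1 ≤ Nat.log 2 n / 2 ^ i) :
    2 ^ (i - 1 - l) * Lsz n i ≤ Lsz n (l + 1) := by
  have he : (l + 1) + (i - 1 - l) = i := by omega
  have h := log_div_ge (Nat.log 2 n) (l + 1) (i - 1 - l) (by rw [he]; exact hq)
  rw [he] at h
  rw [Lsz, Lsz, ← pow_add]
  exact Nat.pow_le_pow_right (by norm_num) (by omega)

lemma sum_inv_Lsz (n i : ℕ) (hq : 1 ≤ Nat.log 2 n / 2 ^ i) :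
    ∑ l ∈ Finset.range i, (1 : ℝ) / (Lsz n (l + 1) : ℝ) ≤ 2 / (Lsz n i : ℝ) := by
  have hpos : (0:ℝ) < (Lsz n i : ℝ) := by exact_mod_cast Lsz_pos n i
  have hterm : ∀ l ∈ Finset.range i,
      (1:ℝ)/(Lsz n (l+1):ℝ) ≤ (1/2)^(i - 1 - l) * (1 / (Lsz n i : ℝ)) := by
    intro l hl
    rw [Finset.mem_range] at hl
    have h := Lsz_ge n i l hl hq
    have h1 : (0:ℝ) < (2:ℝ)^(i-1-l) * (Lsz n i : ℝ) := by positivity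
    have h2 : ((2:ℝ)^(i-1-l) * (Lsz n i : ℝ)) ≤ (Lsz n (l+1) : ℝ) := by
      exact_mod_cast h
    have := one_div_le_one_div_of_le h1 h2
    calc (1:ℝ)/(Lsz n (l+1):ℝ) ≤ 1 / ((2:ℝ)^(i-1-l) * (Lsz n i : ℝ)) := this
      _ = (1/2)^(i-1-l) * (1 / (Lsz n i : ℝ)) := by
        rw [div_pow, one_pow]
        field_simp
  calc ∑ l ∈ Finset.range i, (1 : ℝ) / (Lsz n (l + 1) : ℝ)
      ≤ ∑ l ∈ Finset.range i, (1/2:ℝ)^(i - 1 - l) * (1 / (Lsz n i : ℝ)) :=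
        Finset.sum_le_sum hterm
    _ = (∑ l ∈ Finset.range i, (1/2:ℝ)^(i - 1 - l)) * (1 / (Lsz n i : ℝ)) := by
        rw [Finset.sum_mul]
    _ = (∑ m ∈ Finset.range i, (1/2:ℝ)^m) * (1 / (Lsz n i : ℝ)) := by
        rw [Finset.sum_range_reflect (fun m => (1/2:ℝ)^m) i]
    _ ≤ 2 * (1 / (Lsz n i : ℝ)) := by
        apply mul_le_mul_of_nonneg_right (sum_geometric_two_le i)
        positivity
    _ = 2 / (Lsz n i : ℝ) := by ring

lemma seedSpace_card_pos (n : ℕ) (hn : 1 ≤ n) : 0 < (seedSpace n).card := by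
  apply Finset.card_pos.mpr
  refine ⟨fun _ _ => (⟨1, by omega⟩ : Fin (n+1)), ?_⟩
  rw [seedSpace, Finset.mem_filter]
  exact ⟨Finset.mem_univ _, fun j a => ⟨le_refl _, Lsz_pos n _⟩⟩

lemma prob_bound (n : ℕ) (hn : 1 ≤ n) (y z : ℕ) (hy : 1 ≤ y) (hyz : y < z) (hz : z ≤ n)
    (i : ℕ) (hq : 1 ≤ Nat.log 2 n / 2 ^ i) :
    (((seedSpace n).filter (fun σ => leftEnd n σ i y ≠ leftEnd n σ i z)).card : ℝ)
      / ((seedSpace n).card : ℝ)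
    ≤ 2 * ((z - y : ℕ) : ℝ) / (Lsz n i : ℝ) := by
  have hS : (0:ℝ) < ((seedSpace n).card : ℝ) := by
    exact_mod_cast seedSpace_card_pos n hn
  have hLpos : (0:ℝ) < (Lsz n i : ℝ) := by exact_mod_cast Lsz_pos n i
  rw [div_le_iff₀ hS]
  have h1 : (((seedSpace n).filter (fun σ => leftEnd n σ i y ≠ leftEnd n σ i z)).card : ℝ)
      ≤ ∑ l ∈ Finset.range i,
        (((seedSpace n).filter (fun σ => leftEnd n σ l y = leftEnd n σ l z ∧
          leftEnd n σ (l + 1) y ≠ leftEnd n σ (l + 1) z)).card : ℝ) := by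
    rw [← Nat.cast_sum]
    exact_mod_cast cardE_le_sum n y z i
  have h2 : ∀ l ∈ Finset.range i,
      (((seedSpace n).filter (fun σ => leftEnd n σ l y = leftEnd n σ l z ∧
        leftEnd n σ (l + 1) y ≠ leftEnd n σ (l + 1) z)).card : ℝ)
      ≤ ((z - y : ℕ) : ℝ) * ((seedSpace n).card : ℝ) * (1 / (Lsz n (l+1) : ℝ)) := by
    intro l _
    have hLl : (0:ℝ) < (Lsz n (l+1) : ℝ) := by exact_mod_cast Lsz_pos n (l+1)
    have hk := key_count n hn y z hy hyz hz l
    have hk' : (((seedSpace n).filter (fun σ => leftEnd n σ l y = leftEnd n σ l z ∧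
        leftEnd n σ (l + 1) y ≠ leftEnd n σ (l + 1) z)).card : ℝ) * (Lsz n (l+1) : ℝ)
        ≤ ((z - y : ℕ) : ℝ) * ((seedSpace n).card : ℝ) := by
      exact_mod_cast hk
    calc (((seedSpace n).filter (fun σ => leftEnd n σ l y = leftEnd n σ l z ∧
          leftEnd n σ (l + 1) y ≠ leftEnd n σ (l + 1) z)).card : ℝ)
        = (((seedSpace n).filter (fun σ => leftEnd n σ l y = leftEnd n σ l z ∧
          leftEnd n σ (l + 1) y ≠ leftEnd n σ (l + 1) z)).card : ℝ) * (Lsz n (l+1) : ℝ)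
            * (1 / (Lsz n (l+1) : ℝ)) := by
          field_simp
      _ ≤ ((z - y : ℕ) : ℝ) * ((seedSpace n).card : ℝ) * (1 / (Lsz n (l+1) : ℝ)) := by
          apply mul_le_mul_of_nonneg_right hk'
          positivity
  have h3 : (((seedSpace n).filter (fun σ => leftEnd n σ i y ≠ leftEnd n σ i z)).card : ℝ)
      ≤ ((z - y : ℕ) : ℝ) * ((seedSpace n).card : ℝ) * (2 / (Lsz n i : ℝ)) := by
    calc _ ≤ _ := h1
      _ ≤ ∑ l ∈ Finset.range i, ((z - y : ℕ) : ℝ) * ((seedSpace n).card : ℝ)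
          * (1 / (Lsz n (l+1) : ℝ)) := Finset.sum_le_sum h2
      _ = ((z - y : ℕ) : ℝ) * ((seedSpace n).card : ℝ)
          * ∑ l ∈ Finset.range i, (1 / (Lsz n (l+1) : ℝ)) := by
        rw [Finset.mul_sum]
      _ ≤ _ := by
        apply mul_le_mul_of_nonneg_left (sum_inv_Lsz n i hq)
        positivity
  calc _ ≤ _ := h3
    _ = 2 * ((z - y : ℕ) : ℝ) / (Lsz n i : ℝ) * ((seedSpace n).card : ℝ) := by ring


set_option maxHeartbeats 2000000 in
/-- There are universal constants `c, C ≥ 1` such that for the randomized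
group access tree over `[n]` (`n ≥ 4`): for every access sequence `X ∈ [n]^m`, time `t ≥ 2`,
window size `k ≥ 1`, and every minimizer `t'` realizing `UB^k(t)`, if `j` is the largest integer
with `UB^k(t) ≤ c · n^{1/2^j} / log₂(n^{1/2^j})`, then for every `i ∈ {0, …, j}` the probability
over the random shifts that `x t` and `ub^k(t) = x t'` lie in different level-`i` groups is at
most `C / log₂(n^{1/2^i})`. -/
theorem stmt13 :
    ∃ c C : ℝ, 1 ≤ c ∧ 1 ≤ C ∧
      ∀ (n : ℕ), 4 ≤ n →
        ∀ (m : ℕ) (x : Fin m → ℕ), (∀ s : Fin m, 1 ≤ x s ∧ x s ≤ n) →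
          ∀ (t : Fin m), 1 ≤ (t : ℕ) → ∀ (k : ℕ), 1 ≤ k →
            ∀ j : ℕ,
              ((ubkNat k x t : ℝ) ≤
                  c * (n : ℝ) ^ ((1 : ℝ) / 2 ^ j) /
                    Real.logb 2 ((n : ℝ) ^ ((1 : ℝ) / 2 ^ j))) →
              (¬ ((ubkNat k x t : ℝ) ≤
                  c * (n : ℝ) ^ ((1 : ℝ) / 2 ^ (j + 1)) /
                    Real.logb 2 ((n : ℝ) ^ ((1 : ℝ) / 2 ^ (j + 1))))) →
              ∀ t' : Fin m, t' < t → (t : ℕ) ≤ (t' : ℕ) + k →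
                ((t : ℕ) - (t' : ℕ)) + (max (x t) (x t') - min (x t) (x t')) + 2 =
                  ubkNat k x t →
                ∀ i : ℕ, i ≤ j →
                  (((seedSpace n).filter
                      (fun σ => leftEnd n σ i (x t) ≠ leftEnd n σ i (x t'))).card : ℝ) /
                      ((seedSpace n).card : ℝ)
                    ≤ C / Real.logb 2 ((n : ℝ) ^ ((1 : ℝ) / 2 ^ i)) := by
  refine ⟨1, 8, le_refl 1, by norm_num, ?_⟩
  intro n hn4 m x hx t ht k hk j hyp1 hyp2 t' htt' htk hEq i hij
  have hn0 : (0:ℝ) < (n:ℝ) := by positivity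
  have hn1 : (1:ℝ) < (n:ℝ) := by exact_mod_cast (by omega : 1 < n)
  set L2 := Real.logb 2 (n:ℝ) with hL2def
  have hL2 : 2 ≤ L2 := by
    have h4 : Real.logb 2 (4:ℝ) ≤ L2 :=
      Real.logb_le_logb_of_le one_lt_two (by norm_num) (by exact_mod_cast hn4)
    have : Real.logb 2 (4:ℝ) = 2 := by
      rw [show (4:ℝ) = 2 ^ (2:ℝ) by
        rw [show (2:ℝ) = ((2:ℕ):ℝ) by norm_num, Real.rpow_natCast]; norm_num]
      exact Real.logb_rpow (by norm_num) (by norm_num)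
    linarith
  have hL2pos : (0:ℝ) < L2 := by linarith
  -- rewrite logb of rpow
  have hlogb : ∀ p : ℕ, Real.logb 2 ((n:ℝ) ^ ((1:ℝ)/2^p)) = L2 / 2^p := by
    intro p
    rw [Real.logb_rpow_eq_mul_logb_of_pos hn0, ← hL2def]
    ring
  -- A p as a power of 2
  have hA : ∀ p : ℕ, (n:ℝ) ^ ((1:ℝ)/2^p) = (2:ℝ) ^ (L2 / 2^p) := by
    intro p
    conv_lhs => rw [← Real.rpow_logb two_pos (by norm_num) hn0]
    rw [← Real.rpow_mul (by norm_num), mul_one_div]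
  have hApos : ∀ p : ℕ, (0:ℝ) < (n:ℝ) ^ ((1:ℝ)/2^p) := fun p => Real.rpow_pos_of_pos hn0 _
  -- step 1 : from hyp1 and hyp2 derive 2 * 2^j < L2
  have hu : 2 * (2:ℝ)^j < L2 := by
    rw [hlogb, one_mul] at hyp1 hyp2
    push_neg at hyp2
    have hlt : (n:ℝ) ^ ((1:ℝ)/2^(j+1)) / (L2 / 2^(j+1)) < (n:ℝ) ^ ((1:ℝ)/2^j) / (L2 / 2^j) :=
      lt_of_lt_of_le hyp2 hyp1
    set u := L2 / 2^j with hudef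
    have hupos : 0 < u := by positivity
    have h2j : L2 / 2^(j+1) = u / 2 := by
      rw [hudef, pow_succ]; ring
    rw [hA, hA, h2j] at hlt
    have hhalf : (2:ℝ) ^ (u/2) * (2:ℝ) ^ (u/2) = (2:ℝ) ^ u := by
      rw [← Real.rpow_add two_pos]; ring_nf
    have hbpos : (0:ℝ) < (2:ℝ) ^ (u/2) := Real.rpow_pos_of_pos two_pos _
    rw [div_lt_div_iff₀ (by positivity) hupos] at hlt
    -- hlt : 2^(u/2) * u < 2^u * (u/2)
    have h2b : 2 * (2:ℝ)^(u/2) < (2:ℝ)^u := by nlinarith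
    have hb2 : (2:ℝ) < (2:ℝ)^(u/2) := by nlinarith
    have : (2:ℝ)^(1:ℝ) < (2:ℝ)^(u/2) := by rwa [Real.rpow_one]
    have hu2 : 1 < u / 2 := (Real.rpow_lt_rpow_left_iff one_lt_two).mp this
    have : 2 < u := by linarith
    rw [hudef] at this
    have h2jpos : (0:ℝ) < (2:ℝ)^j := by positivity
    rw [lt_div_iff₀ h2jpos] at this
    linarith
  -- step 2 : 2^(j+1) ≤ Nat.log 2 n
  have hKj : 2 ^ (j + 1) ≤ Nat.log 2 n := by
    have h1 : ((2:ℝ) ^ ((2^(j+1) : ℕ) : ℝ)) < (2:ℝ) ^ L2 := by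
      apply (Real.rpow_lt_rpow_left_iff one_lt_two).mpr
      push_cast
      rw [pow_succ]
      linarith
    rw [Real.rpow_logb two_pos (by norm_num) hn0] at h1
    rw [Real.rpow_natCast] at h1
    have h2 : ((2 ^ (2 ^ (j+1)) : ℕ) : ℝ) < (n:ℝ) := by push_cast; exact h1
    have h3 : 2 ^ (2 ^ (j+1)) ≤ n := le_of_lt (by exact_mod_cast h2)
    exact (Nat.le_log_iff_pow_le (by norm_num) (by omega)).mpr h3
  set K := Nat.log 2 n with hKdef
  have hqi : 2 ≤ K / 2 ^ i := by
    have h1 : 2 ^ i * 2 ≤ K := by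
      calc 2 ^ i * 2 = 2 ^ (i + 1) := by ring
        _ ≤ 2 ^ (j + 1) := Nat.pow_le_pow_right (by norm_num) (by omega)
        _ ≤ K := hKj
    exact (Nat.le_div_iff_mul_le (Nat.two_pow_pos i)).mpr
      (by omega : 2 * 2 ^ i ≤ K)
  -- normalize the filter to min/max form
  set y := min (x t) (x t') with hydef
  set z := max (x t) (x t') with hzdef
  have hy1 : 1 ≤ y := le_min (hx t).1 (hx t').1
  have hzn : z ≤ n := max_le (hx t).2 (hx t').2
  have hfilter : ((seedSpace n).filter
      (fun σ => leftEnd n σ i (x t) ≠ leftEnd n σ i (x t'))).card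
      = ((seedSpace n).filter (fun σ => leftEnd n σ i y ≠ leftEnd n σ i z)).card := by
    apply congrArg Finset.card
    apply Finset.filter_congr
    intro σ _
    rcases le_total (x t) (x t') with h | h
    · have hy' : y = x t := min_eq_left h
      have hz' : z = x t' := max_eq_right h
      rw [hy', hz']
    · have hy' : y = x t' := min_eq_right h
      have hz' : z = x t := max_eq_left h
      rw [hy', hz']
      exact ne_comm
  rw [hfilter, hlogb]
  have hgoalpos : (0:ℝ) < L2 / 2 ^ i := by positivity
  rcases eq_or_lt_of_le (min_le_max : y ≤ z) with hyz | hyz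
  · -- equal keys: probability is zero
    have hempty : ((seedSpace n).filter (fun σ => leftEnd n σ i y ≠ leftEnd n σ i z)) = ∅ := by
      apply Finset.filter_false_of_mem
      intro σ _
      have hyz' : y = z := hyz
      rw [hyz']
      simp
    rw [hempty]
    simp only [Finset.card_empty, Nat.cast_zero, zero_div]
    positivity
  -- main case
  have hprob := prob_bound n (by omega) y z hy1 hyz hzn i (one_le_two.trans hqi)
  -- bound d = z - y by ubkNat
  have hdU : ((z - y : ℕ) : ℝ) ≤ (ubkNat k x t : ℝ) := by
    have : (z - y : ℕ) ≤ ubkNat k x t := by omega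
    exact_mod_cast this
  -- bound ubkNat
  rw [hlogb, one_mul] at hyp1
  have hUbound : (ubkNat k x t : ℝ) ≤ 2^j * ((n:ℝ) ^ ((1:ℝ)/2^j)) / L2 := by
    calc (ubkNat k x t : ℝ) ≤ (n:ℝ) ^ ((1:ℝ)/2^j) / (L2 / 2^j) := hyp1
      _ = 2^j * ((n:ℝ) ^ ((1:ℝ)/2^j)) / L2 := by
        rw [div_div_eq_mul_div]; ring
  -- chain: 2^j * A j ≤ 2^i * A i
  have hstep : ∀ p : ℕ, p + 1 ≤ j →
      (2:ℝ)^(p+1) * ((n:ℝ) ^ ((1:ℝ)/2^(p+1))) ≤ (2:ℝ)^p * ((n:ℝ) ^ ((1:ℝ)/2^p)) := by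
    intro p hpj
    have hb : (2:ℝ) ≤ (n:ℝ) ^ ((1:ℝ)/2^(p+1)) := by
      rw [hA]
      have he : (1:ℝ) ≤ L2 / 2^(p+1) := by
        rw [le_div_iff₀ (by positivity)]
        have : (2:ℝ)^(p+1) ≤ (2:ℝ)^j := by
          apply pow_le_pow_right₀ (by norm_num) (by omega)
        nlinarith
      calc (2:ℝ) = (2:ℝ)^(1:ℝ) := (Real.rpow_one 2).symm
        _ ≤ _ := Real.rpow_le_rpow_of_exponent_le (by norm_num) he
    have hsq : ((n:ℝ) ^ ((1:ℝ)/2^(p+1))) * ((n:ℝ) ^ ((1:ℝ)/2^(p+1)))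
        = (n:ℝ) ^ ((1:ℝ)/2^p) := by
      rw [← Real.rpow_add hn0]
      congr 1
      rw [pow_succ]
      field_simp
      ring
    have hbpos := hApos (p+1)
    calc (2:ℝ)^(p+1) * ((n:ℝ) ^ ((1:ℝ)/2^(p+1)))
        = (2:ℝ)^p * (2 * ((n:ℝ) ^ ((1:ℝ)/2^(p+1)))) := by ring
      _ ≤ (2:ℝ)^p * (((n:ℝ) ^ ((1:ℝ)/2^(p+1))) * ((n:ℝ) ^ ((1:ℝ)/2^(p+1)))) := by
          apply mul_le_mul_of_nonneg_left _ (by positivity)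
          exact mul_le_mul_of_nonneg_right hb (le_of_lt hbpos)
      _ = (2:ℝ)^p * ((n:ℝ) ^ ((1:ℝ)/2^p)) := by rw [hsq]
  have hchain : ∀ r : ℕ, i + r ≤ j →
      (2:ℝ)^(i+r) * ((n:ℝ) ^ ((1:ℝ)/2^(i+r))) ≤ (2:ℝ)^i * ((n:ℝ) ^ ((1:ℝ)/2^i)) := by
    intro r
    induction r with
    | zero => intro _; simp
    | succ r ih =>
      intro hr
      have h1 : i + (r + 1) = (i + r) + 1 := by omega
      rw [h1]
      calc (2:ℝ)^((i+r)+1) * ((n:ℝ) ^ ((1:ℝ)/2^((i+r)+1)))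
          ≤ (2:ℝ)^(i+r) * ((n:ℝ) ^ ((1:ℝ)/2^(i+r))) := hstep (i+r) (by omega)
        _ ≤ _ := ih (by omega)
  have hAA : (2:ℝ)^j * ((n:ℝ) ^ ((1:ℝ)/2^j)) ≤ (2:ℝ)^i * ((n:ℝ) ^ ((1:ℝ)/2^i)) := by
    have := hchain (j - i) (by omega)
    rwa [show i + (j - i) = j by omega] at this
  -- A i ≤ 4 * Lsz n i
  have hAiLsz : (n:ℝ) ^ ((1:ℝ)/2^i) ≤ 4 * (Lsz n i : ℝ) := by
    have hnK : (n:ℝ) ≤ (2:ℝ) ^ ((K + 1 : ℕ) : ℝ) := by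
      rw [Real.rpow_natCast]
      exact_mod_cast le_of_lt (Nat.lt_pow_succ_log_self (by norm_num) n)
    have h1 : (n:ℝ) ^ ((1:ℝ)/2^i) ≤ ((2:ℝ) ^ ((K + 1 : ℕ) : ℝ)) ^ ((1:ℝ)/2^i) :=
      Real.rpow_le_rpow (le_of_lt hn0) hnK (by positivity)
    have h2 : ((2:ℝ) ^ ((K + 1 : ℕ) : ℝ)) ^ ((1:ℝ)/2^i)
        = (2:ℝ) ^ (((K + 1 : ℕ) : ℝ) / 2^i) := by
      rw [← Real.rpow_mul (by norm_num), mul_one_div]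
    have hKq : (K + 1 : ℕ) ≤ 2 ^ i * (K / 2 ^ i + 2) := by
      have hdm := Nat.div_add_mod K (2 ^ i)
      have hmlt : K % 2 ^ i < 2 ^ i := Nat.mod_lt _ (Nat.two_pow_pos i)
      calc K + 1 ≤ 2 ^ i * (K / 2 ^ i) + 2 ^ i + 2 ^ i := by omega
        _ = 2 ^ i * (K / 2 ^ i + 2) := by ring
    have h3 : ((K + 1 : ℕ) : ℝ) / 2^i ≤ ((K / 2 ^ i + 2 : ℕ) : ℝ) := by
      rw [div_le_iff₀ (by positivity)]
      have : ((K + 1 : ℕ) : ℝ) ≤ ((2 ^ i * (K / 2 ^ i + 2) : ℕ) : ℝ) := by exact_mod_cast hKq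
      calc ((K + 1 : ℕ) : ℝ) ≤ ((2 ^ i * (K / 2 ^ i + 2) : ℕ) : ℝ) := this
        _ = ((K / 2 ^ i + 2 : ℕ) : ℝ) * 2 ^ i := by push_cast; ring
    have h4 : (2:ℝ) ^ (((K + 1 : ℕ) : ℝ) / 2^i) ≤ (2:ℝ) ^ (((K / 2 ^ i + 2 : ℕ) : ℝ)) :=
      Real.rpow_le_rpow_of_exponent_le (by norm_num) h3
    have h5 : (2:ℝ) ^ (((K / 2 ^ i + 2 : ℕ) : ℝ)) = 4 * (Lsz n i : ℝ) := by
      rw [Real.rpow_natCast]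
      rw [show Lsz n i = 2 ^ (K / 2 ^ i) from rfl]
      push_cast
      rw [pow_add]
      ring
    calc (n:ℝ) ^ ((1:ℝ)/2^i) ≤ _ := h1
      _ = _ := h2
      _ ≤ _ := h4
      _ = _ := h5
  -- put everything together
  have hLszpos : (0:ℝ) < (Lsz n i : ℝ) := by exact_mod_cast Lsz_pos n i
  have h2ipos : (0:ℝ) < (2:ℝ)^i := by positivity
  have hAAA : (2:ℝ)^j * ((n:ℝ) ^ ((1:ℝ)/2^j)) ≤ (2:ℝ)^i * (4 * (Lsz n i : ℝ)) := by
    calc (2:ℝ)^j * ((n:ℝ) ^ ((1:ℝ)/2^j)) ≤ (2:ℝ)^i * ((n:ℝ) ^ ((1:ℝ)/2^i)) := hAA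
      _ ≤ _ := mul_le_mul_of_nonneg_left hAiLsz (le_of_lt h2ipos)
  have hUfinal : (ubkNat k x t : ℝ) ≤ (2:ℝ)^i * (4 * (Lsz n i : ℝ)) / L2 :=
    hUbound.trans ((div_le_div_iff_of_pos_right hL2pos).mpr hAAA)
  have hdfin : ((z - y : ℕ) : ℝ) * L2 ≤ (2:ℝ)^i * (4 * (Lsz n i : ℝ)) := by
    have := hdU.trans hUfinal
    exact (le_div_iff₀ hL2pos).mp this
  calc (((seedSpace n).filter (fun σ => leftEnd n σ i y ≠ leftEnd n σ i z)).card : ℝ)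
        / ((seedSpace n).card : ℝ)
      ≤ 2 * ((z - y : ℕ) : ℝ) / (Lsz n i : ℝ) := hprob
    _ ≤ 8 / (L2 / 2 ^ i) := by
        rw [div_div_eq_mul_div]
        rw [div_le_div_iff₀ hLszpos hL2pos]
        nlinarith
end

section
/- For every group access tree T over [n] and every access sequence X = (x_1,…,x_m) ∈ [n]^m, the point set produced by GGreedy on X — the union of X_p = {(x_t,t) : 1 ≤ t ≤ m} with all points added by GGreedy — is arborally satisfied. -/
open scoped Classical

/-- The left boundary key of the level-`j` group containing `a`. -/
def lb {n : ℕ} (T : GAT n) (j : ℕ) (a : Fin n) : Fin n :=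
  (T.grp j a).min' ⟨a, T.mem_grp j a⟩

/-- The right boundary key of the level-`j` group containing `a`. -/
def rb {n : ℕ} (T : GAT n) (j : ℕ) (a : Fin n) : Fin n :=
  (T.grp j a).max' ⟨a, T.mem_grp j a⟩

/-- The closed axis-parallel rectangle spanned by the points `p` and `q` (which lie on no common
horizontal or vertical line) contains no point of `P` other than `p` and `q`. -/
def EmptyRect {n : ℕ} (P : Finset (Fin n × ℕ)) (p q : Fin n × ℕ) : Prop :=
  p.1 ≠ q.1 ∧ p.2 ≠ q.2 ∧
    ∀ r ∈ P, r ≠ p → r ≠ q →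
      ¬ (min p.1 q.1 ≤ r.1 ∧ r.1 ≤ max p.1 q.1 ∧ min p.2 q.2 ≤ r.2 ∧ r.2 ≤ max p.2 q.2)

/-- One level of GGreedy's processing of the access `xt` at time `t`, at level `j`: first the
two boundary points of the accessed group `g_j(xt)` are added at y-coordinate `t`, and then,
for every level-`j` group inside the parent `g_{j-1}(xt)` that is unsatisfied — a previously
placed point at one of its boundary keys forms, with one of the points just added at the
boundary keys of `g_j(xt)`, an empty rectangle — the corresponding boundary point is added at
y-coordinate `t`. -/
noncomputable def levelStep {n : ℕ} (T : GAT n) (t : ℕ) (xt : Fin n) (j : ℕ)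
    (P : Finset (Fin n × ℕ)) : Finset (Fin n × ℕ) :=
  let base := insert (lb T j xt, t) (insert (rb T j xt, t) P)
  base ∪ (Finset.univ.filter (fun p : Fin n =>
      p ∈ T.grp (j - 1) xt ∧ (p = lb T j p ∨ p = rb T j p) ∧
      ∃ r ∈ base, r.1 = p ∧ r.2 < t ∧
        ∃ q : Fin n, (q = lb T j xt ∨ q = rb T j xt) ∧
          EmptyRect base r (q, t))).image (fun p => (p, t))

/-- GGreedy's point set after processing the access `xt` at time `t` through levels
`1, …, j`, starting from the point set `P` (the accessed point `(xt, t)` is added first). -/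
noncomputable def afterLevel {n : ℕ} (T : GAT n) (t : ℕ) (xt : Fin n)
    (P : Finset (Fin n × ℕ)) (j : ℕ) : Finset (Fin n × ℕ) :=
  (List.range j).foldl (fun acc i => levelStep T t xt (i + 1) acc) (insert (xt, t) P)

/-- GGreedy's processing of the access `xt` at time `t`: all levels `1, …, depth` in order. -/
noncomputable def timeStep {n : ℕ} (T : GAT n) (t : ℕ) (xt : Fin n)
    (P : Finset (Fin n × ℕ)) : Finset (Fin n × ℕ) :=
  afterLevel T t xt P T.depth

/-- GGreedy's point set after the first `t` accesses of the sequence `x`. -/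
noncomputable def gg {n m : ℕ} (T : GAT n) (x : Fin m → Fin n) : ℕ → Finset (Fin n × ℕ)
  | 0 => ∅
  | t + 1 => if h : t < m then timeStep T t (x ⟨t, h⟩) (gg T x t) else gg T x t

/-- The final point set produced by GGreedy on the access sequence `x`: it contains the
accessed points `(x t, t)` for all `t` together with all points added by GGreedy. -/
noncomputable def ggFinal {n m : ℕ} (T : GAT n) (x : Fin m → Fin n) : Finset (Fin n × ℕ) :=
  gg T x m

/-- A point set (keys × times) is arborally satisfied if every pair of points not on a common
horizontal or vertical line has a third point of the set in the closed rectangle it spans. -/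
def ArbSat {n : ℕ} (P : Finset (Fin n × ℕ)) : Prop :=
  ∀ p ∈ P, ∀ q ∈ P, p.1 ≠ q.1 → p.2 ≠ q.2 →
    ∃ r ∈ P, r ≠ p ∧ r ≠ q ∧ min p.1 q.1 ≤ r.1 ∧ r.1 ≤ max p.1 q.1 ∧
      min p.2 q.2 ≤ r.2 ∧ r.2 ≤ max p.2 q.2
namespace GGsat

variable {n : ℕ} (T : GAT n)

lemma grp_ne (j : ℕ) (a : Fin n) : (T.grp j a).Nonempty := ⟨a, T.mem_grp j a⟩

lemma lb_mem (j : ℕ) (a : Fin n) : lb T j a ∈ T.grp j a := Finset.min'_mem _ _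

lemma rb_mem (j : ℕ) (a : Fin n) : rb T j a ∈ T.grp j a := Finset.max'_mem _ _

lemma lb_le (j : ℕ) (a : Fin n) : lb T j a ≤ a := Finset.min'_le _ _ (T.mem_grp j a)

lemma le_rb (j : ℕ) (a : Fin n) : a ≤ rb T j a := Finset.le_max' _ _ (T.mem_grp j a)

lemma mem_grp_iff {j : ℕ} {a b : Fin n} :
    b ∈ T.grp j a ↔ lb T j a ≤ b ∧ b ≤ rb T j a := by
  obtain ⟨lo, hi, h⟩ := T.grp_interval j a
  have ha := T.mem_grp j a
  rw [h] at ha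
  obtain ⟨h1, h2⟩ := Finset.mem_Icc.mp ha
  have hlb : lb T j a = lo := by
    apply le_antisymm
    · exact Finset.min'_le _ _ (by rw [h]; exact Finset.mem_Icc.mpr ⟨le_refl _, le_trans h1 h2⟩)
    · apply Finset.le_min'
      intro y hy
      rw [h] at hy
      exact (Finset.mem_Icc.mp hy).1
  have hrb : rb T j a = hi := by
    apply le_antisymm
    · apply Finset.max'_le
      intro y hy
      rw [h] at hy
      exact (Finset.mem_Icc.mp hy).2
    · exact Finset.le_max' _ _ (by rw [h]; exact Finset.mem_Icc.mpr ⟨le_trans h1 h2, le_refl _⟩)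
  rw [h, hlb, hrb, Finset.mem_Icc]

lemma grp_eq_of_mem {j : ℕ} {a b : Fin n} (hb : b ∈ T.grp j a) :
    T.grp j b = T.grp j a := T.grp_eq j a b hb

lemma lb_eq_of_mem {j : ℕ} {a b : Fin n} (hb : b ∈ T.grp j a) :
    lb T j b = lb T j a := by
  unfold lb
  have h := grp_eq_of_mem T hb
  apply le_antisymm
  · exact Finset.min'_le _ _ (by rw [h]; exact lb_mem T j a)
  · exact Finset.min'_le _ _ (by rw [← h]; exact lb_mem T j b)

lemma rb_eq_of_mem {j : ℕ} {a b : Fin n} (hb : b ∈ T.grp j a) :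
    rb T j b = rb T j a := by
  unfold rb
  have h := grp_eq_of_mem T hb
  apply le_antisymm
  · exact Finset.le_max' _ _ (by rw [← h]; exact rb_mem T j b)
  · exact Finset.le_max' _ _ (by rw [h]; exact rb_mem T j a)

lemma grp_mono {i j : ℕ} (hij : i ≤ j) (a : Fin n) : T.grp j a ⊆ T.grp i a := by
  induction j with
  | zero => simp_all
  | succ k ih =>
    rcases Nat.lt_or_ge i (k+1) with h | h
    · exact (T.grp_subset k a).trans (ih (Nat.lt_succ_iff.mp h))
    · have : i = k + 1 := le_antisymm hij h
      subst this; exact fun z hz => hz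

lemma lb_mono {i j : ℕ} (hij : i ≤ j) (a : Fin n) : lb T i a ≤ lb T j a :=
  (mem_grp_iff T).mp (grp_mono T hij a (lb_mem T j a)) |>.1

lemma rb_anti {i j : ℕ} (hij : i ≤ j) (a : Fin n) : rb T j a ≤ rb T i a :=
  (mem_grp_iff T).mp (grp_mono T hij a (rb_mem T j a)) |>.2

lemma lb_aligned_mono {i j : ℕ} {a : Fin n} (h : a = lb T i a) (hij : i ≤ j) :
    a = lb T j a := by
  have h2 := lb_mono T hij a
  rw [← h] at h2
  exact le_antisymm h2 (lb_le T j a)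

lemma rb_aligned_mono {i j : ℕ} {a : Fin n} (h : a = rb T i a) (hij : i ≤ j) :
    a = rb T j a := by
  have h2 := rb_anti T hij a
  rw [← h] at h2
  exact le_antisymm (le_rb T j a) h2

/-- If `a` is not in `χ`'s level-`j` group and `a < lb T j χ`, then the whole group of `a`
is to the left: `rb T j a < lb T j χ`. -/
lemma sibling_left {j : ℕ} {a χ : Fin n} (hna : a ∉ T.grp j χ) (hlt : a < lb T j χ) :
    rb T j a < lb T j χ := by
  by_contra h
  push_neg at h
  have hmem : lb T j χ ∈ T.grp j a :=
    (mem_grp_iff T).mpr ⟨le_trans (lb_le T j a) hlt.le, h⟩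
  have h1 : T.grp j (lb T j χ) = T.grp j a := grp_eq_of_mem T hmem
  have h2 : T.grp j (lb T j χ) = T.grp j χ := grp_eq_of_mem T (lb_mem T j χ)
  have h3 : T.grp j a = T.grp j χ := h1.symm.trans h2
  exact hna (h3 ▸ T.mem_grp j a)

lemma sibling_right {j : ℕ} {a χ : Fin n} (hna : a ∉ T.grp j χ) (hlt : rb T j χ < a) :
    rb T j χ < lb T j a := by
  by_contra h
  push_neg at h
  have hmem : rb T j χ ∈ T.grp j a :=
    (mem_grp_iff T).mpr ⟨h, le_trans hlt.le (le_rb T j a)⟩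
  have h1 : T.grp j (rb T j χ) = T.grp j a := grp_eq_of_mem T hmem
  have h2 : T.grp j (rb T j χ) = T.grp j χ := grp_eq_of_mem T (rb_mem T j χ)
  have h3 : T.grp j a = T.grp j χ := h1.symm.trans h2
  exact hna (h3 ▸ T.mem_grp j a)

end GGsat
namespace GGsat

variable {n : ℕ} (T : GAT n)

/-- The base set used in `levelStep`. -/
noncomputable def bse (t : ℕ) (xt : Fin n) (j : ℕ) (P : Finset (Fin n × ℕ)) :
    Finset (Fin n × ℕ) :=
  insert (lb T j xt, t) (insert (rb T j xt, t) P)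

lemma levelStep_eq (t : ℕ) (xt : Fin n) (j : ℕ) (P : Finset (Fin n × ℕ)) :
    levelStep T t xt j P = bse T t xt j P ∪
      (Finset.univ.filter (fun p : Fin n =>
        p ∈ T.grp (j - 1) xt ∧ (p = lb T j p ∨ p = rb T j p) ∧
        ∃ r ∈ bse T t xt j P, r.1 = p ∧ r.2 < t ∧
          ∃ q : Fin n, (q = lb T j xt ∨ q = rb T j xt) ∧
            EmptyRect (bse T t xt j P) r (q, t))).image (fun p => (p, t)) := rfl

lemma subset_bse (t : ℕ) (xt : Fin n) (j : ℕ) (P : Finset (Fin n × ℕ)) :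
    P ⊆ bse T t xt j P := fun z hz => by
  simp [bse, Finset.mem_insert]; tauto

lemma bse_subset_levelStep (t : ℕ) (xt : Fin n) (j : ℕ) (P : Finset (Fin n × ℕ)) :
    bse T t xt j P ⊆ levelStep T t xt j P := by
  rw [levelStep_eq]; exact Finset.subset_union_left

lemma subset_levelStep (t : ℕ) (xt : Fin n) (j : ℕ) (P : Finset (Fin n × ℕ)) :
    P ⊆ levelStep T t xt j P :=
  (subset_bse T t xt j P).trans (bse_subset_levelStep T t xt j P)

lemma mem_levelStep_elim {t : ℕ} {xt : Fin n} {j : ℕ} {P : Finset (Fin n × ℕ)}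
    {z : Fin n × ℕ} (hz : z ∈ levelStep T t xt j P) :
    z ∈ P ∨ z.2 = t := by
  rw [levelStep_eq] at hz
  rcases Finset.mem_union.mp hz with h | h
  · simp only [bse, Finset.mem_insert] at h
    rcases h with h | h | h
    · right; rw [h]
    · right; rw [h]
    · left; exact h
  · obtain ⟨p, _, hp2⟩ := Finset.mem_image.mp h
    right; rw [← hp2]

lemma afterLevel_zero (t : ℕ) (xt : Fin n) (P : Finset (Fin n × ℕ)) :
    afterLevel T t xt P 0 = insert (xt, t) P := rfl

lemma afterLevel_succ (t : ℕ) (xt : Fin n) (P : Finset (Fin n × ℕ)) (j : ℕ) :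
    afterLevel T t xt P (j + 1) = levelStep T t xt (j + 1) (afterLevel T t xt P j) := by
  unfold afterLevel
  rw [List.range_succ, List.foldl_append]
  rfl

lemma afterLevel_mono (t : ℕ) (xt : Fin n) (P : Finset (Fin n × ℕ)) {i j : ℕ}
    (hij : i ≤ j) : afterLevel T t xt P i ⊆ afterLevel T t xt P j := by
  induction j with
  | zero => simp_all
  | succ k ih =>
    rcases Nat.lt_or_ge i (k+1) with h | h
    · refine (ih (Nat.lt_succ_iff.mp h)).trans ?_
      rw [afterLevel_succ]
      exact subset_levelStep T t xt (k+1) _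
    · have : i = k + 1 := le_antisymm hij h
      subst this; exact fun z hz => hz

lemma subset_afterLevel (t : ℕ) (xt : Fin n) (P : Finset (Fin n × ℕ)) (j : ℕ) :
    P ⊆ afterLevel T t xt P j := by
  refine (fun z hz => ?_)
  have h0 : z ∈ afterLevel T t xt P 0 := by
    rw [afterLevel_zero]; exact Finset.mem_insert_of_mem hz
  exact afterLevel_mono T t xt P (Nat.zero_le j) h0

lemma mem_afterLevel_elim {t : ℕ} {xt : Fin n} {P : Finset (Fin n × ℕ)} {j : ℕ}
    {z : Fin n × ℕ} (hz : z ∈ afterLevel T t xt P j) : z ∈ P ∨ z.2 = t := by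
  induction j with
  | zero =>
    rw [afterLevel_zero] at hz
    rcases Finset.mem_insert.mp hz with h | h
    · right; rw [h]
    · left; exact h
  | succ k ih =>
    rw [afterLevel_succ] at hz
    rcases mem_levelStep_elim T hz with h | h
    · exact ih h
    · right; exact h

variable {m : ℕ} (x : Fin m → Fin n)

lemma gg_succ_of_lt {t : ℕ} (ht : t < m) :
    gg T x (t + 1) = timeStep T t (x ⟨t, ht⟩) (gg T x t) := by
  simp [gg, ht]

lemma gg_succ_of_ge {t : ℕ} (ht : ¬ t < m) : gg T x (t + 1) = gg T x t := by
  simp [gg, ht]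

lemma gg_times : ∀ t, ∀ z ∈ gg T x t, z.2 < t := by
  intro t
  induction t with
  | zero => intro z hz; simp [gg] at hz
  | succ k ih =>
    intro z hz
    by_cases hk : k < m
    · rw [gg_succ_of_lt T x hk] at hz
      rcases mem_afterLevel_elim T hz with h | h
      · exact Nat.lt_succ_of_lt (ih z h)
      · omega
    · rw [gg_succ_of_ge T x hk] at hz
      exact Nat.lt_succ_of_lt (ih z hz)

lemma gg_mono : ∀ {t t' : ℕ}, t ≤ t' → gg T x t ⊆ gg T x t' := by
  intro t t' h
  induction t' with
  | zero =>
    have h0 : t = 0 := Nat.le_zero.mp h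
    subst h0; exact fun z hz => hz
  | succ k ih =>
    rcases Nat.lt_or_ge t (k+1) with h2 | h2
    · refine (ih (Nat.lt_succ_iff.mp h2)).trans ?_
      by_cases hk : k < m
      · rw [gg_succ_of_lt T x hk]
        exact subset_afterLevel T k _ _ _
      · rw [gg_succ_of_ge T x hk]
    · have : t = k + 1 := le_antisymm h h2
      subst this; exact fun z hz => hz

/-- Every point of `gg` appears already right after its own time step. -/
lemma gg_early : ∀ t, ∀ z ∈ gg T x t, z ∈ gg T x (z.2 + 1) := by
  intro t
  induction t with
  | zero => intro z hz; simp [gg] at hz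
  | succ k ih =>
    intro z hz
    by_cases hk : k < m
    · rw [gg_succ_of_lt T x hk] at hz
      rcases mem_afterLevel_elim T hz with h | h
      · exact ih z h
      · rw [h]; rw [gg_succ_of_lt T x hk]; exact hz
    · rw [gg_succ_of_ge T x hk] at hz
      exact ih z hz

end GGsat
namespace GGsat

variable {n : ℕ} (T : GAT n)

/-- The filter condition of `levelStep` at level `i+1`. -/
def FilterCond (u : ℕ) (χ : Fin n) (P0 : Finset (Fin n × ℕ)) (i : ℕ) (c : Fin n) : Prop :=
  c ∈ T.grp i χ ∧ (c = lb T (i+1) c ∨ c = rb T (i+1) c) ∧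
    ∃ r ∈ bse T u χ (i+1) (afterLevel T u χ P0 i), r.1 = c ∧ r.2 < u ∧
      ∃ q : Fin n, (q = lb T (i+1) χ ∨ q = rb T (i+1) χ) ∧
        EmptyRect (bse T u χ (i+1) (afterLevel T u χ P0 i)) r (q, u)

lemma bdry_mem_level (u : ℕ) (χ : Fin n) (P0 : Finset (Fin n × ℕ)) (i : ℕ) :
    (lb T (i+1) χ, u) ∈ afterLevel T u χ P0 (i+1) ∧
    (rb T (i+1) χ, u) ∈ afterLevel T u χ P0 (i+1) := by
  rw [afterLevel_succ]
  constructor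
  · exact bse_subset_levelStep T u χ (i+1) _ (Finset.mem_insert_self _ _)
  · exact bse_subset_levelStep T u χ (i+1) _
      (Finset.mem_insert_of_mem (Finset.mem_insert_self _ _))

lemma access_mem (u : ℕ) (χ : Fin n) (P0 : Finset (Fin n × ℕ)) (j : ℕ) :
    (χ, u) ∈ afterLevel T u χ P0 j :=
  afterLevel_mono T u χ P0 (Nat.zero_le j) (Finset.mem_insert_self _ _)

lemma filter_fires {u : ℕ} {χ : Fin n} {P0 : Finset (Fin n × ℕ)} {i : ℕ} {c : Fin n}
    (hc : FilterCond T u χ P0 i c) :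
    (c, u) ∈ afterLevel T u χ P0 (i+1) := by
  rw [afterLevel_succ, levelStep_eq]
  apply Finset.mem_union_right
  exact Finset.mem_image.mpr ⟨c, Finset.mem_filter.mpr ⟨Finset.mem_univ c, hc⟩, rfl⟩

lemma origin {u : ℕ} {χ : Fin n} {P0 : Finset (Fin n × ℕ)}
    (hP0 : ∀ z ∈ P0, z.2 < u) :
    ∀ {j : ℕ} {c : Fin n}, (c, u) ∈ afterLevel T u χ P0 j →
      c = χ ∨ (∃ i < j, c = lb T (i+1) χ ∨ c = rb T (i+1) χ) ∨
        (∃ i < j, (c, u) ∉ bse T u χ (i+1) (afterLevel T u χ P0 i) ∧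
          FilterCond T u χ P0 i c) := by
  intro j
  induction j with
  | zero =>
    intro c hc
    rw [afterLevel_zero] at hc
    rcases Finset.mem_insert.mp hc with h | h
    · left; exact congrArg Prod.fst h
    · exact absurd (hP0 _ h) (by simp)
  | succ k ih =>
    intro c hc
    by_cases hb : (c, u) ∈ afterLevel T u χ P0 k
    · rcases ih hb with h | ⟨i, hi, h⟩ | ⟨i, hi, h⟩
      · left; exact h
      · right; left; exact ⟨i, Nat.lt_succ_of_lt hi, h⟩
      · right; right; exact ⟨i, Nat.lt_succ_of_lt hi, h⟩
    · rw [afterLevel_succ, levelStep_eq] at hc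
      have hbse : (c, u) ∈ bse T u χ (k+1) (afterLevel T u χ P0 k) →
          c = lb T (k+1) χ ∨ c = rb T (k+1) χ := by
        intro h
        rcases Finset.mem_insert.mp h with h | h
        · left; exact congrArg Prod.fst h
        · rcases Finset.mem_insert.mp h with h | h
          · right; exact congrArg Prod.fst h
          · exact absurd h hb
      rcases Finset.mem_union.mp hc with h | h
      · right; left; exact ⟨k, Nat.lt_succ_self k, hbse h⟩
      · obtain ⟨p, hp, hpe⟩ := Finset.mem_image.mp h
        have hpc : p = c := congrArg Prod.fst hpe
        subst hpc
        by_cases h2 : (p, u) ∈ bse T u χ (k+1) (afterLevel T u χ P0 k)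
        · right; left; exact ⟨k, Nat.lt_succ_self k, hbse h2⟩
        · right; right
          refine ⟨k, Nat.lt_succ_self k, h2, ?_⟩
          exact (Finset.mem_filter.mp hp).2

variable {m : ℕ} (x : Fin m → Fin n)

lemma gg_step_eq {u : ℕ} (hu : u < m) :
    gg T x (u + 1) = afterLevel T u (x ⟨u, hu⟩) (gg T x u) T.depth := by
  rw [gg_succ_of_lt T x hu]; rfl

/-- The INV4 invariant as a predicate on a point set. -/
def Inv4Prop (P : Finset (Fin n × ℕ)) (p : Fin n) (u j : ℕ) : Prop :=
  ((lb T j p, u) ∈ P ∧ (rb T j p, u) ∈ P) ∨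
  ((p = lb T j p ∨ p = rb T j p) ∧ ∃ u' < u, (p, u') ∈ P) ∨
  (p = lb T j p ∧ ∃ e, (e, u) ∈ P ∧ rb T j p ≤ e) ∨
  (p = rb T j p ∧ ∃ e, (e, u) ∈ P ∧ e ≤ lb T j p)

lemma inv4prop_mono {P P' : Finset (Fin n × ℕ)} (h : P ⊆ P') {p : Fin n} {u j : ℕ}
    (hp : Inv4Prop T P p u j) : Inv4Prop T P' p u j := by
  unfold Inv4Prop at *
  rcases hp with ⟨h1, h2⟩ | ⟨h1, u', h2, h3⟩ | ⟨h1, e, h2, h3⟩ | ⟨h1, e, h2, h3⟩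
  · exact Or.inl ⟨h h1, h h2⟩
  · exact Or.inr (Or.inl ⟨h1, u', h2, h h3⟩)
  · exact Or.inr (Or.inr (Or.inl ⟨h1, e, h h2, h3⟩))
  · exact Or.inr (Or.inr (Or.inr ⟨h1, e, h h2, h3⟩))

lemma inv4 : ∀ t, ∀ {p : Fin n} {u j : ℕ}, (p, u) ∈ gg T x t →
    1 ≤ j → j ≤ T.depth → Inv4Prop T (gg T x t) p u j := by
  intro t
  induction t with
  | zero => intro p u j hp _ _; simp [gg] at hp
  | succ k ih =>
    intro p u j hp hj1 hj2
    by_cases hk : k < m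
    · set χ := x ⟨k, hk⟩ with hχ
      rw [gg_step_eq T x hk] at hp ⊢
      have hsub : gg T x k ⊆ afterLevel T k χ (gg T x k) T.depth :=
        subset_afterLevel T k χ _ _
      by_cases hold : (p, u) ∈ gg T x k
      · exact inv4prop_mono T hsub (by rw [← gg_step_eq T x hk] at *; exact ih hold hj1 hj2)
      · have hut : u = k := by
          rcases mem_afterLevel_elim T hp with h | h
          · exact absurd h hold
          · exact h
        subst hut
        have hP0 : ∀ z ∈ gg T x u, z.2 < u := gg_times T x u
        obtain ⟨i, rfl⟩ : ∃ i, j = i + 1 := ⟨j - 1, (Nat.succ_pred_eq_of_pos hj1).symm⟩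
        have hidep : i < T.depth := hj2
        rcases origin T hP0 hp with hacc | ⟨k', hk', hside⟩ | ⟨k', hk', hnb, hfc⟩
        · -- p = χ : both boundaries present
          left
          rw [hacc]
          have := bdry_mem_level T u χ (gg T x u) i
          constructor
          · exact afterLevel_mono T u χ _ hidep this.1
          · exact afterLevel_mono T u χ _ hidep this.2
        · -- p is a boundary of the accessed group at level k'+1
          rcases Nat.lt_or_ge i k' with hik | hik
          · -- i + 1 ≤ k' : level i+1 is an ancestor: both boundaries present
            left
            have hpmem : p ∈ T.grp (i+1) χ := by
              rcases hside with h | h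
              · exact grp_mono T (by omega) χ (h ▸ lb_mem T (k'+1) χ)
              · exact grp_mono T (by omega) χ (h ▸ rb_mem T (k'+1) χ)
            have h1 : lb T (i+1) p = lb T (i+1) χ := lb_eq_of_mem T hpmem
            have h2 : rb T (i+1) p = rb T (i+1) χ := rb_eq_of_mem T hpmem
            have := bdry_mem_level T u χ (gg T x u) i
            rw [h1, h2]
            exact ⟨afterLevel_mono T u χ _ hidep this.1,
                   afterLevel_mono T u χ _ hidep this.2⟩
          · -- k' ≤ i : aligned, use (iii)/(iii')
            have hbd := bdry_mem_level T u χ (gg T x u) k'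
            rcases hside with h | h
            · have hpmem : p ∈ T.grp (k'+1) χ := h ▸ lb_mem T (k'+1) χ
              have hpal : p = lb T (k'+1) p := by
                rw [lb_eq_of_mem T hpmem, ← h]
              right; right; left
              refine ⟨lb_aligned_mono T hpal (by omega), rb T (k'+1) χ, ?_, ?_⟩
              · exact afterLevel_mono T u χ _ (by omega) hbd.2
              · rw [← rb_eq_of_mem T hpmem]
                exact rb_anti T (by omega) p
            · have hpmem : p ∈ T.grp (k'+1) χ := h ▸ rb_mem T (k'+1) χ
              have hpal : p = rb T (k'+1) p := by
                rw [rb_eq_of_mem T hpmem, ← h]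
              right; right; right
              refine ⟨rb_aligned_mono T hpal (by omega), lb T (k'+1) χ, ?_, ?_⟩
              · exact afterLevel_mono T u χ _ (by omega) hbd.1
              · rw [← lb_eq_of_mem T hpmem]
                exact lb_mono T (by omega) p
        · -- filter case at level k'+1
          obtain ⟨hpg, hal, r, hr, hr1, hr2, _⟩ := hfc
          rcases Nat.lt_or_ge i k' with hik | hik
          · -- ancestor level: both boundaries
            left
            have hpmem : p ∈ T.grp (i+1) χ := grp_mono T (by omega) χ hpg
            have h1 : lb T (i+1) p = lb T (i+1) χ := lb_eq_of_mem T hpmem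
            have h2 : rb T (i+1) p = rb T (i+1) χ := rb_eq_of_mem T hpmem
            have := bdry_mem_level T u χ (gg T x u) i
            rw [h1, h2]
            exact ⟨afterLevel_mono T u χ _ hidep this.1,
                   afterLevel_mono T u χ _ hidep this.2⟩
          · -- aligned + older point: (ii)
            right; left
            constructor
            · rcases hal with h | h
              · exact Or.inl (lb_aligned_mono T h (by omega))
              · exact Or.inr (rb_aligned_mono T h (by omega))
            · refine ⟨r.2, hr2, ?_⟩
              have : r = (p, r.2) := Prod.ext hr1 rfl
              rw [← this]
              have hrin : r ∈ afterLevel T u χ (gg T x u) (k'+1) := by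
                rw [afterLevel_succ]
                exact bse_subset_levelStep T u χ (k'+1) _ hr
              exact afterLevel_mono T u χ _ (by omega) hrin
    · rw [gg_succ_of_ge T x hk] at hp ⊢
      exact ih hp hj1 hj2

end GGsat
namespace GGsat

variable {n m : ℕ} (T : GAT n) (x : Fin m → Fin n)

/-- Separation level: the first level whose group around `χ` misses `a`. -/
lemma seplevel {a χ : Fin n} (hne : a ≠ χ) :
    ∃ i, i + 1 ≤ T.depth ∧ a ∈ T.grp i χ ∧ a ∉ T.grp (i + 1) χ := by
  classical
  set P : ℕ → Prop := fun j => a ∈ T.grp j χ with hP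
  have hP0 : P 0 := by rw [hP]; simp only; rw [T.grp_root]; exact Finset.mem_univ a
  set js := Nat.findGreatest P T.depth with hjs
  have hspec : P js := Nat.findGreatest_spec (Nat.zero_le _) hP0
  have hle : js ≤ T.depth := Nat.findGreatest_le _
  have hlt : js < T.depth := by
    rcases lt_or_eq_of_le hle with h | h
    · exact h
    · exfalso
      have : a ∈ T.grp js χ := hspec
      rw [h, T.grp_leaf T.depth χ (le_refl _)] at this
      exact hne (Finset.mem_singleton.mp this)
  refine ⟨js, hlt, hspec, ?_⟩
  exact Nat.findGreatest_is_greatest (Nat.lt_succ_self js) hlt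

lemma unsat_false {a c : Fin n} {s u : ℕ}
    (hr : (a, s) ∈ gg T x m) (hq : (c, u) ∈ gg T x m) (hsu : s < u) (hac : a ≠ c)
    (hE : ∀ z ∈ gg T x m, z ≠ ((a, s) : Fin n × ℕ) → z ≠ ((c, u) : Fin n × ℕ) →
      ¬(min a c ≤ z.1 ∧ z.1 ≤ max a c ∧ s ≤ z.2 ∧ z.2 ≤ u)) : False := by
  classical
  have hu : u < m := gg_times T x m _ hq
  set χ : Fin n := x ⟨u, hu⟩ with hχdef
  set P0 : Finset (Fin n × ℕ) := gg T x u with hP0def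
  have hP0t : ∀ z ∈ P0, z.2 < u := gg_times T x u
  have hq1 : (c, u) ∈ afterLevel T u χ P0 T.depth := by
    rw [← gg_step_eq T x hu]
    exact gg_early T x m _ hq
  have hr0 : (a, s) ∈ P0 := by
    have h1 : (a, s) ∈ gg T x (s + 1) := gg_early T x m _ hr
    exact gg_mono T x (by omega) h1
  have hsubm : ∀ j, j ≤ T.depth → afterLevel T u χ P0 j ⊆ gg T x m := by
    intro j hjd z hz
    have h1 := afterLevel_mono T u χ P0 hjd hz
    rw [← gg_step_eq T x hu] at h1
    exact gg_mono T x (by omega) h1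
  have bseInGG : ∀ i, i + 1 ≤ T.depth →
      bse T u χ (i+1) (afterLevel T u χ P0 i) ⊆ gg T x m := by
    intro i hdep z hz
    have h1 : z ∈ afterLevel T u χ P0 (i+1) := by
      rw [afterLevel_succ]
      exact bse_subset_levelStep T u χ (i+1) _ hz
    exact hsubm (i+1) hdep h1
  have ffGG : ∀ i, i + 1 ≤ T.depth → ∀ {p : Fin n}, FilterCond T u χ P0 i p →
      (p, u) ∈ gg T x m := by
    intro i hdep p hfc
    exact hsubm (i+1) hdep (filter_fires T hfc)
  have bdryP : ∀ i, i + 1 ≤ T.depth →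
      ((lb T (i+1) χ, u) ∈ gg T x m ∧ (rb T (i+1) χ, u) ∈ gg T x m) := by
    intro i hdep
    have h := bdry_mem_level T u χ P0 i
    exact ⟨hsubm (i+1) hdep h.1, hsubm (i+1) hdep h.2⟩
  have accP : (χ, u) ∈ gg T x m := hsubm 0 (Nat.zero_le _) (access_mem T u χ P0 0)
  have membseP0 : ∀ i, ∀ {z : Fin n × ℕ}, z ∈ P0 →
      z ∈ bse T u χ (i+1) (afterLevel T u χ P0 i) := by
    intro i z hz
    exact subset_bse T u χ (i+1) _ (subset_afterLevel T u χ P0 i hz)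
  have memP0_of_gg : ∀ {e : Fin n} {v : ℕ}, (e, v) ∈ gg T x m → v < u → (e, v) ∈ P0 := by
    intro e v h hv
    have h1 : (e, v) ∈ gg T x (v + 1) := gg_early T x m _ h
    exact gg_mono T x (by omega) h1
  have neS : ∀ (e : Fin n) (v : ℕ), v ≠ s → ((e, v) : Fin n × ℕ) ≠ (a, s) :=
    fun e v hv h => hv (congrArg Prod.snd h)
  have neU : ∀ (e : Fin n) (v : ℕ), v ≠ u → ((e, v) : Fin n × ℕ) ≠ (c, u) :=
    fun e v hv h => hv (congrArg Prod.snd h)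
  have neA : ∀ (e : Fin n) (v : ℕ), e ≠ a → ((e, v) : Fin n × ℕ) ≠ (a, s) :=
    fun e v hv h => hv (congrArg Prod.fst h)
  have neC : ∀ (e : Fin n) (v : ℕ), e ≠ c → ((e, v) : Fin n × ℕ) ≠ (c, u) :=
    fun e v hv h => hv (congrArg Prod.fst h)
  rcases lt_or_gt_of_ne hac with hlt | hlt
  · -- LEFT case : a < c
    have wit : ∀ (e : Fin n) (v : ℕ), (e, v) ∈ gg T x m →
        ((e, v) : Fin n × ℕ) ≠ (a, s) → ((e, v) : Fin n × ℕ) ≠ (c, u) →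
        a ≤ e → e ≤ c → s ≤ v → v ≤ u → False := by
      intro e v h h1 h2 b1 b2 b3 b4
      exact hE (e, v) h h1 h2
        ⟨by rw [min_eq_left hlt.le]; exact b1, by rw [max_eq_right hlt.le]; exact b2, b3, b4⟩
    have hside : χ < a ∨ c ≤ χ := by
      by_contra hcon
      push_neg at hcon
      exact wit χ u accP (neS χ u (by omega)) (neC χ u hcon.2.ne)
        hcon.1 hcon.2.le hsu.le le_rfl
    -- unified handler for c = χ and c = lb boundary
    have hboard : a ≠ χ → c ≤ χ →
        (∀ i, i + 1 ≤ T.depth → a ∈ T.grp i χ → a ∉ T.grp (i+1) χ →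
          lb T (i+1) χ ≤ c) → False := by
      intro hane hcle hlamle
      obtain ⟨i, hdep, hai, hani⟩ := seplevel T hane
      have harb : a ≤ rb T (i+1) χ :=
        le_trans hlt.le (le_trans hcle (le_rb T (i+1) χ))
      have halam : a < lb T (i+1) χ := by
        by_contra h
        push_neg at h
        exact hani ((mem_grp_iff T).mpr ⟨h, harb⟩)
      rcases lt_or_eq_of_le (hlamle i hdep hai hani) with hlc | hlc
      · exact wit (lb T (i+1) χ) u (bdryP i hdep).1 (neS _ u (by omega))
          (neC _ u hlc.ne) halam.le hlc.le hsu.le le_rfl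
      · -- lb T (i+1) χ = c
        by_cases hal : a = lb T (i+1) a ∨ a = rb T (i+1) a
        · -- aligned: the level-(i+1) filter fires on a
          have hER2 : EmptyRect (bse T u χ (i+1) (afterLevel T u χ P0 i)) (a, s)
              (lb T (i+1) χ, u) := by
            refine ⟨halam.ne, by omega, ?_⟩
            intro z hz hz1 hz2 hb
            simp only at hb
            obtain ⟨b1, b2, b3, b4⟩ := hb
            rw [min_eq_left halam.le] at b1
            rw [max_eq_right halam.le, hlc] at b2
            rw [min_eq_left hsu.le] at b3
            rw [max_eq_right hsu.le] at b4
            have hz2' : z ≠ ((c, u) : Fin n × ℕ) := by rw [← hlc]; exact hz2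
            exact hE z (bseInGG i hdep hz) hz1 hz2'
              ⟨by rw [min_eq_left hlt.le]; exact b1,
               by rw [max_eq_right hlt.le]; exact b2, b3, b4⟩
          have hfc : FilterCond T u χ P0 i a :=
            ⟨hai, hal, (a, s), membseP0 i hr0, rfl, hsu,
              lb T (i+1) χ, Or.inl rfl, hER2⟩
          exact wit a u (ffGG i hdep hfc) (neS a u (by omega)) (neC a u hac)
            le_rfl hlt.le hsu.le le_rfl
        · push_neg at hal
          rcases inv4 T x m hr (by omega) hdep with ⟨hL, hR⟩ | ⟨hα, _⟩ | ⟨hα, _⟩ | ⟨hα, _⟩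
          · have hab : a < rb T (i+1) a := lt_of_le_of_ne (le_rb T (i+1) a) hal.2
            have hbc : rb T (i+1) a < lb T (i+1) χ := sibling_left T hani halam
            rw [hlc] at hbc
            exact wit (rb T (i+1) a) s hR (neA _ s hab.ne') (neU _ s (by omega))
              hab.le hbc.le le_rfl hsu.le
          · rcases hα with h | h
            · exact hal.1 h
            · exact hal.2 h
          · exact hal.1 hα
          · exact hal.2 hα
    by_cases hcacc : c = χ
    · refine hboard ?_ (le_of_eq hcacc) (fun i hdep hai hani => hcacc ▸ lb_le T (i+1) χ)
      rw [← hcacc]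
      exact hlt.ne
    · rcases origin T hP0t hq1 with h | ⟨i', hi'dep, hside2⟩ | ⟨i', hi'dep, hnbse, hfc⟩
      · exact absurd h hcacc
      · rcases hside2 with hclb | hcrb
        · -- c = lb T (i'+1) χ
          have hane : a ≠ χ := fun h =>
            absurd (h ▸ (hclb ▸ lb_le T (i'+1) χ : c ≤ χ)) (not_le.mpr hlt)
          refine hboard hane (hclb ▸ lb_le T (i'+1) χ) ?_
          intro i hdep hai hani
          have hanotc : a ∉ T.grp (i'+1) χ := by
            intro hmem
            have := ((mem_grp_iff T).mp hmem).1
            rw [← hclb] at this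
            exact absurd this (not_le.mpr hlt)
          have hii' : i + 1 ≤ i' + 1 := by
            by_contra hcon
            push_neg at hcon
            exact hanotc (grp_mono T (by omega) χ hai)
          rw [hclb]
          exact lb_mono T hii' χ
        · -- c = rb T (i'+1) χ  (case 2')
          have hχc : χ ≤ c := hcrb ▸ le_rb T (i'+1) χ
          have hχa : χ < a := by
            rcases hside with h | h
            · exact h
            · exact absurd (le_antisymm hχc h) (fun hh => hcacc hh.symm)
          have hag : a ∈ T.grp (i'+1) χ := (mem_grp_iff T).mpr
            ⟨le_trans (lb_le T (i'+1) χ) hχa.le, hcrb ▸ hlt.le⟩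
          have hlbeq : lb T (i'+1) a = lb T (i'+1) χ := lb_eq_of_mem T hag
          have hrbeq : rb T (i'+1) a = rb T (i'+1) χ := rb_eq_of_mem T hag
          rcases inv4 T x m hr (by omega) hi'dep with ⟨hL, hR⟩ | ⟨hα, _⟩ | ⟨hα, _⟩ | ⟨hα, _⟩
          · rw [hrbeq, ← hcrb] at hR
            exact wit c s hR (neA c s hlt.ne') (neU c s (by omega))
              hlt.le le_rfl le_rfl hsu.le
          · rcases hα with h | h
            · rw [hlbeq] at h
              exact absurd hχa (not_lt.mpr ((le_of_eq h).trans (lb_le T (i'+1) χ)))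
            · rw [hrbeq, ← hcrb] at h
              exact hlt.ne h
          · rw [hlbeq] at hα
            exact absurd hχa (not_lt.mpr ((le_of_eq hα).trans (lb_le T (i'+1) χ)))
          · rw [hrbeq, ← hcrb] at hα
            exact hlt.ne hα
      · -- case 3 : filter-added
        obtain ⟨hcg, hcal, rr, hrrmem, hrr1, hrr2, B, hBside, hER⟩ := hfc
        have hrreq : rr = ((c, rr.2) : Fin n × ℕ) := Prod.ext hrr1 rfl
        set sc := rr.2 with hscdef
        rw [hrreq] at hrrmem hER
        have hsc_u : sc < u := hrr2
        have hBmem : (B, u) ∈ gg T x m := by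
          rcases hBside with h | h
          · exact h ▸ (bdryP i' hi'dep).1
          · exact h ▸ (bdryP i' hi'dep).2
        have hscs : sc < s := by
          rcases lt_or_ge sc s with h | h
          · exact h
          · exact (wit c sc (bseInGG i' (by omega) hrrmem) (neA c sc hlt.ne')
              (neU c sc (by omega)) hlt.le le_rfl h hsc_u.le).elim
        have hcB : c ≠ B := hER.1
        have hstrip := hER.2.2
        rcases lt_trichotomy B c with hBc | hBc | hBc
        · rcases le_or_gt B a with hBa | hBa
          · exact hstrip (a, s) (membseP0 i' hr0)
              (fun h => hlt.ne (congrArg Prod.fst h))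
              (fun h => (by omega : s ≠ u) (congrArg Prod.snd h))
              ⟨le_trans (min_le_right c B) hBa,
               le_trans hlt.le (le_max_left c B),
               le_trans (min_le_left sc u) hscs.le,
               le_trans hsu.le (le_max_right sc u)⟩
          · exact wit B u hBmem (neS B u (by omega)) (neC B u hBc.ne)
              hBa.le hBc.le hsu.le le_rfl
        · exact hcB hBc.symm
        · -- c < B : main filter case
          have hBrb : B ≤ rb T (i'+1) χ := by
            rcases hBside with h | h
            · rw [h]; exact le_trans (lb_le T (i'+1) χ) (le_rb T (i'+1) χ)
            · exact le_of_eq h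
          have hlamB : lb T (i'+1) χ ≤ B := by
            rcases hBside with h | h
            · exact le_of_eq h.symm
            · rw [h]; exact le_trans (lb_le T (i'+1) χ) (le_rb T (i'+1) χ)
          have hcnot : c ∉ T.grp (i'+1) χ := by
            intro hmem
            rcases hcal with h | h
            · rw [lb_eq_of_mem T hmem] at h
              exact hnbse (by rw [h]; exact Finset.mem_insert_self _ _)
            · rw [rb_eq_of_mem T hmem] at h
              exact hnbse (by
                rw [h]
                exact Finset.mem_insert_of_mem (Finset.mem_insert_self _ _))
          have hclam : c < lb T (i'+1) χ := by
            by_contra hcon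
            push_neg at hcon
            exact hcnot ((mem_grp_iff T).mpr ⟨hcon, le_trans hBc.le hBrb⟩)
          by_cases hag : a ∈ T.grp i' χ
          · have halam : a < lb T (i'+1) χ := lt_trans hlt hclam
            have hani : a ∉ T.grp (i'+1) χ := by
              intro hmem
              exact absurd ((mem_grp_iff T).mp hmem).1 (not_le.mpr halam)
            by_cases hal : a = lb T (i'+1) a ∨ a = rb T (i'+1) a
            · have hER2 : EmptyRect (bse T u χ (i'+1) (afterLevel T u χ P0 i')) (a, s)
                  (lb T (i'+1) χ, u) := by
                refine ⟨halam.ne, by omega, ?_⟩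
                intro z hz hz1 hz2 hb
                obtain ⟨b1, b2, b3, b4⟩ := hb
                rw [min_eq_left halam.le] at b1
                rw [max_eq_right halam.le] at b2
                rw [min_eq_left hsu.le] at b3
                rw [max_eq_right hsu.le] at b4
                rcases le_or_gt z.1 c with hzc | hzc
                · have hz2' : z ≠ ((c, u) : Fin n × ℕ) := fun h => hnbse (h ▸ hz)
                  exact hE z (bseInGG i' (by omega) hz) hz1 hz2'
                    ⟨le_trans (min_le_left a c) b1, le_trans hzc (le_max_right a c), b3, b4⟩
                · have hzB : z ≠ ((B, u) : Fin n × ℕ) := by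
                    intro h
                    have hfst : z.1 = B := congrArg Prod.fst h
                    have hble : B ≤ lb T (i'+1) χ := hfst ▸ b2
                    have hBeq : B = lb T (i'+1) χ := le_antisymm hble hlamB
                    exact hz2 (by rw [h, hBeq])
                  exact hstrip z hz (fun h => hzc.ne' (congrArg Prod.fst h)) hzB
                    ⟨le_trans (min_le_left c B) hzc.le,
                     le_trans b2 (le_trans hlamB (le_max_right c B)),
                     le_trans (min_le_left sc u) (le_trans hscs.le b3),
                     le_trans b4 (le_max_right sc u)⟩
              have hfc2 : FilterCond T u χ P0 i' a :=
                ⟨hag, hal, (a, s), membseP0 i' hr0, rfl, hsu,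
                  lb T (i'+1) χ, Or.inl rfl, hER2⟩
              exact wit a u (ffGG i' (by omega) hfc2) (neS a u (by omega)) (neC a u hac)
                le_rfl hlt.le hsu.le le_rfl
            · push_neg at hal
              rcases inv4 T x m hr (by omega) hi'dep with ⟨hL, hR⟩ | ⟨hα, _⟩ | ⟨hα, _⟩ | ⟨hα, _⟩
              · have hab : a < rb T (i'+1) a := lt_of_le_of_ne (le_rb T (i'+1) a) hal.2
                have hblam : rb T (i'+1) a < lb T (i'+1) χ := sibling_left T hani halam
                rcases le_or_gt (rb T (i'+1) a) c with h | h
                · exact wit (rb T (i'+1) a) s hR (neA _ s hab.ne') (neU _ s (by omega))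
                    hab.le h le_rfl hsu.le
                · have hbP0 : (rb T (i'+1) a, s) ∈ P0 := memP0_of_gg hR (by omega)
                  exact hstrip (rb T (i'+1) a, s) (membseP0 i' hbP0)
                    (fun hh => h.ne' (congrArg Prod.fst hh))
                    (fun hh => (by omega : s ≠ u) (congrArg Prod.snd hh))
                    ⟨le_trans (min_le_left c B) h.le,
                     le_trans hblam.le (le_trans hlamB (le_max_right c B)),
                     le_trans (min_le_left sc u) hscs.le,
                     le_trans hsu.le (le_max_right sc u)⟩
              · rcases hα with h | h
                · exact hal.1 h
                · exact hal.2 h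
              · exact hal.1 hα
              · exact hal.2 hα
          · have hi0 : i' ≠ 0 := by
              intro h
              rw [h, T.grp_root] at hag
              exact hag (Finset.mem_univ a)
            obtain ⟨i0, rfl⟩ : ∃ i0, i' = i0 + 1 :=
              ⟨i' - 1, (Nat.succ_pred_eq_of_pos (Nat.pos_of_ne_zero hi0)).symm⟩
            have haL : a < lb T (i0+1) χ := by
              by_contra hcon
              push_neg at hcon
              exact hag ((mem_grp_iff T).mpr
                ⟨hcon, le_trans hlt.le ((mem_grp_iff T).mp hcg).2⟩)
            have hLc : lb T (i0+1) χ ≤ c := ((mem_grp_iff T).mp hcg).1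
            have hLne : lb T (i0+1) χ ≠ c := by
              intro h
              apply hnbse
              have h1 := (bdry_mem_level T u χ P0 i0).1
              rw [h] at h1
              exact subset_bse T u χ (i0+1+1) _ h1
            exact wit (lb T (i0+1) χ) u (bdryP i0 (by omega)).1 (neS _ u (by omega))
              (neC _ u hLne) haL.le hLc hsu.le le_rfl
  · -- RIGHT case : c < a
    have wit : ∀ (e : Fin n) (v : ℕ), (e, v) ∈ gg T x m →
        ((e, v) : Fin n × ℕ) ≠ (a, s) → ((e, v) : Fin n × ℕ) ≠ (c, u) →
        c ≤ e → e ≤ a → s ≤ v → v ≤ u → False := by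
      intro e v h h1 h2 b1 b2 b3 b4
      exact hE (e, v) h h1 h2
        ⟨by rw [min_eq_right hlt.le]; exact b1,
         by rw [max_eq_left hlt.le]; exact b2, b3, b4⟩
    have hside : a < χ ∨ χ ≤ c := by
      by_contra hcon
      push_neg at hcon
      exact wit χ u accP (neS χ u (by omega)) (neC χ u hcon.2.ne')
        hcon.2.le hcon.1 hsu.le le_rfl
    have hboard : a ≠ χ → χ ≤ c →
        (∀ i, i + 1 ≤ T.depth → a ∈ T.grp i χ → a ∉ T.grp (i+1) χ →
          c ≤ rb T (i+1) χ) → False := by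
      intro hane hcle hlamle
      obtain ⟨i, hdep, hai, hani⟩ := seplevel T hane
      have halb : lb T (i+1) χ ≤ a :=
        le_trans (lb_le T (i+1) χ) (le_trans hcle hlt.le)
      have halam : rb T (i+1) χ < a := by
        by_contra h
        push_neg at h
        exact hani ((mem_grp_iff T).mpr ⟨halb, h⟩)
      rcases lt_or_eq_of_le (hlamle i hdep hai hani) with hlc | hlc
      · exact wit (rb T (i+1) χ) u (bdryP i hdep).2 (neS _ u (by omega))
          (neC _ u hlc.ne') hlc.le halam.le hsu.le le_rfl
      · -- c = rb T (i+1) χ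
        by_cases hal : a = lb T (i+1) a ∨ a = rb T (i+1) a
        · have hER2 : EmptyRect (bse T u χ (i+1) (afterLevel T u χ P0 i)) (a, s)
              (rb T (i+1) χ, u) := by
            refine ⟨halam.ne', by omega, ?_⟩
            intro z hz hz1 hz2 hb
            obtain ⟨b1, b2, b3, b4⟩ := hb
            rw [min_eq_right halam.le] at b1
            rw [max_eq_left halam.le] at b2
            rw [min_eq_left hsu.le] at b3
            rw [max_eq_right hsu.le] at b4
            have hz2' : z ≠ ((c, u) : Fin n × ℕ) := by rw [hlc]; exact hz2
            exact hE z (bseInGG i hdep hz) hz1 hz2'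
              ⟨le_trans (min_le_right a c) (hlc ▸ b1),
               le_trans b2 (le_max_left a c), b3, b4⟩
          have hfc : FilterCond T u χ P0 i a :=
            ⟨hai, hal, (a, s), membseP0 i hr0, rfl, hsu,
              rb T (i+1) χ, Or.inr rfl, hER2⟩
          exact wit a u (ffGG i hdep hfc) (neS a u (by omega)) (neC a u hac)
            hlt.le le_rfl hsu.le le_rfl
        · push_neg at hal
          rcases inv4 T x m hr (by omega) hdep with ⟨hL, hR⟩ | ⟨hα, _⟩ | ⟨hα, _⟩ | ⟨hα, _⟩
          · have hab : lb T (i+1) a < a :=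
              lt_of_le_of_ne (lb_le T (i+1) a) (fun h => hal.1 h.symm)
            have hbc : rb T (i+1) χ < lb T (i+1) a := sibling_right T hani halam
            rw [← hlc] at hbc
            exact wit (lb T (i+1) a) s hL (neA _ s hab.ne) (neU _ s (by omega))
              hbc.le hab.le le_rfl hsu.le
          · rcases hα with h | h
            · exact hal.1 h
            · exact hal.2 h
          · exact hal.1 hα
          · exact hal.2 hα
    by_cases hcacc : c = χ
    · refine hboard ?_ (ge_of_eq hcacc)
        (fun i hdep hai hani => hcacc ▸ le_rb T (i+1) χ)
      rw [← hcacc]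
      exact hlt.ne'
    · rcases origin T hP0t hq1 with h | ⟨i', hi'dep, hside2⟩ | ⟨i', hi'dep, hnbse, hfc⟩
      · exact absurd h hcacc
      · rcases hside2 with hclb | hcrb
        · -- c = lb T (i'+1) χ  (mirror case 2')
          have hχc : c ≤ χ := hclb ▸ lb_le T (i'+1) χ
          have hχa : a < χ := by
            rcases hside with h | h
            · exact h
            · exact absurd (le_antisymm h hχc) (fun hh => hcacc hh.symm)
          have hag : a ∈ T.grp (i'+1) χ := (mem_grp_iff T).mpr
            ⟨hclb ▸ hlt.le, le_trans hχa.le (le_rb T (i'+1) χ)⟩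
          have hlbeq : lb T (i'+1) a = lb T (i'+1) χ := lb_eq_of_mem T hag
          have hrbeq : rb T (i'+1) a = rb T (i'+1) χ := rb_eq_of_mem T hag
          rcases inv4 T x m hr (by omega) hi'dep with ⟨hL, hR⟩ | ⟨hα, _⟩ | ⟨hα, _⟩ | ⟨hα, _⟩
          · rw [hlbeq, ← hclb] at hL
            exact wit c s hL (neA c s hlt.ne) (neU c s (by omega))
              le_rfl hlt.le le_rfl hsu.le
          · rcases hα with h | h
            · rw [hlbeq, ← hclb] at h
              exact hlt.ne' h
            · rw [hrbeq] at h
              exact absurd hχa (not_lt.mpr ((le_rb T (i'+1) χ).trans (ge_of_eq h)))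
          · rw [hlbeq, ← hclb] at hα
            exact hlt.ne' hα
          · rw [hrbeq] at hα
            exact absurd hχa (not_lt.mpr ((le_rb T (i'+1) χ).trans (ge_of_eq hα)))
        · -- c = rb T (i'+1) χ  (mirror boundary case)
          have hane : a ≠ χ := by
            intro h
            have : χ ≤ c := hcrb ▸ le_rb T (i'+1) χ
            rw [← h] at this
            exact absurd hlt (not_lt.mpr this)
          refine hboard hane (hcrb ▸ le_rb T (i'+1) χ) ?_
          intro i hdep hai hani
          have hanotc : a ∉ T.grp (i'+1) χ := by
            intro hmem
            have := ((mem_grp_iff T).mp hmem).2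
            rw [← hcrb] at this
            exact absurd this (not_le.mpr hlt)
          have hii' : i + 1 ≤ i' + 1 := by
            by_contra hcon
            push_neg at hcon
            exact hanotc (grp_mono T (by omega) χ hai)
          rw [hcrb]
          exact rb_anti T hii' χ
      · -- mirror case 3 : filter-added
        obtain ⟨hcg, hcal, rr, hrrmem, hrr1, hrr2, B, hBside, hER⟩ := hfc
        have hrreq : rr = ((c, rr.2) : Fin n × ℕ) := Prod.ext hrr1 rfl
        set sc := rr.2 with hscdef
        rw [hrreq] at hrrmem hER
        have hsc_u : sc < u := hrr2
        have hBmem : (B, u) ∈ gg T x m := by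
          rcases hBside with h | h
          · exact h ▸ (bdryP i' hi'dep).1
          · exact h ▸ (bdryP i' hi'dep).2
        have hscs : sc < s := by
          rcases lt_or_ge sc s with h | h
          · exact h
          · exact (wit c sc (bseInGG i' (by omega) hrrmem) (neA c sc hlt.ne)
              (neU c sc (by omega)) le_rfl hlt.le h hsc_u.le).elim
        have hcB : c ≠ B := hER.1
        have hstrip := hER.2.2
        rcases lt_trichotomy c B with hBc | hBc | hBc
        · rcases le_or_gt a B with hBa | hBa
          · exact hstrip (a, s) (membseP0 i' hr0)
              (fun h => hlt.ne' (congrArg Prod.fst h))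
              (fun h => (by omega : s ≠ u) (congrArg Prod.snd h))
              ⟨le_trans (min_le_left c B) hlt.le,
               le_trans hBa (le_max_right c B),
               le_trans (min_le_left sc u) hscs.le,
               le_trans hsu.le (le_max_right sc u)⟩
          · exact wit B u hBmem (neS B u (by omega)) (neC B u hBc.ne')
              hBc.le hBa.le hsu.le le_rfl
        · exact hcB hBc
        · -- B < c : main mirror filter case
          have hBrb : B ≤ rb T (i'+1) χ := by
            rcases hBside with h | h
            · rw [h]; exact le_trans (lb_le T (i'+1) χ) (le_rb T (i'+1) χ)
            · exact le_of_eq h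
          have hlbB : lb T (i'+1) χ ≤ B := by
            rcases hBside with h | h
            · exact le_of_eq h.symm
            · rw [h]; exact le_trans (lb_le T (i'+1) χ) (le_rb T (i'+1) χ)
          have hcnot : c ∉ T.grp (i'+1) χ := by
            intro hmem
            rcases hcal with h | h
            · rw [lb_eq_of_mem T hmem] at h
              exact hnbse (by rw [h]; exact Finset.mem_insert_self _ _)
            · rw [rb_eq_of_mem T hmem] at h
              exact hnbse (by
                rw [h]
                exact Finset.mem_insert_of_mem (Finset.mem_insert_self _ _))
          have hclam : rb T (i'+1) χ < c := by
            by_contra hcon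
            push_neg at hcon
            exact hcnot ((mem_grp_iff T).mpr ⟨le_trans hlbB hBc.le, hcon⟩)
          by_cases hag : a ∈ T.grp i' χ
          · have halam : rb T (i'+1) χ < a := lt_trans hclam hlt
            have hani : a ∉ T.grp (i'+1) χ := by
              intro hmem
              exact absurd ((mem_grp_iff T).mp hmem).2 (not_le.mpr halam)
            by_cases hal : a = lb T (i'+1) a ∨ a = rb T (i'+1) a
            · have hER2 : EmptyRect (bse T u χ (i'+1) (afterLevel T u χ P0 i')) (a, s)
                  (rb T (i'+1) χ, u) := by
                refine ⟨halam.ne', by omega, ?_⟩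
                intro z hz hz1 hz2 hb
                obtain ⟨b1, b2, b3, b4⟩ := hb
                rw [min_eq_right halam.le] at b1
                rw [max_eq_left halam.le] at b2
                rw [min_eq_left hsu.le] at b3
                rw [max_eq_right hsu.le] at b4
                rcases le_or_gt c z.1 with hzc | hzc
                · have hz2' : z ≠ ((c, u) : Fin n × ℕ) := fun h => hnbse (h ▸ hz)
                  exact hE z (bseInGG i' (by omega) hz) hz1 hz2'
                    ⟨le_trans (min_le_right a c) hzc, le_trans b2 (le_max_left a c), b3, b4⟩
                · have hzB : z ≠ ((B, u) : Fin n × ℕ) := by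
                    intro h
                    have hfst : z.1 = B := congrArg Prod.fst h
                    have hble : rb T (i'+1) χ ≤ B := hfst ▸ b1
                    have hBeq : B = rb T (i'+1) χ := le_antisymm hBrb hble
                    exact hz2 (by rw [h, hBeq])
                  exact hstrip z hz (fun h => hzc.ne (congrArg Prod.fst h)) hzB
                    ⟨le_trans (min_le_right c B) (le_trans hBrb b1),
                     le_trans hzc.le (le_max_left c B),
                     le_trans (min_le_left sc u) (le_trans hscs.le b3),
                     le_trans b4 (le_max_right sc u)⟩
              have hfc2 : FilterCond T u χ P0 i' a :=
                ⟨hag, hal, (a, s), membseP0 i' hr0, rfl, hsu,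
                  rb T (i'+1) χ, Or.inr rfl, hER2⟩
              exact wit a u (ffGG i' (by omega) hfc2) (neS a u (by omega)) (neC a u hac)
                hlt.le le_rfl hsu.le le_rfl
            · push_neg at hal
              rcases inv4 T x m hr (by omega) hi'dep with ⟨hL, hR⟩ | ⟨hα, _⟩ | ⟨hα, _⟩ | ⟨hα, _⟩
              · have hab : lb T (i'+1) a < a :=
                  lt_of_le_of_ne (lb_le T (i'+1) a) (fun h => hal.1 h.symm)
                have hblam : rb T (i'+1) χ < lb T (i'+1) a := sibling_right T hani halam
                rcases le_or_gt c (lb T (i'+1) a) with h | h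
                · exact wit (lb T (i'+1) a) s hL (neA _ s hab.ne) (neU _ s (by omega))
                    h hab.le le_rfl hsu.le
                · have hbP0 : (lb T (i'+1) a, s) ∈ P0 := memP0_of_gg hL (by omega)
                  exact hstrip (lb T (i'+1) a, s) (membseP0 i' hbP0)
                    (fun hh => h.ne (congrArg Prod.fst hh))
                    (fun hh => (by omega : s ≠ u) (congrArg Prod.snd hh))
                    ⟨le_trans (min_le_right c B) (le_trans hBrb hblam.le),
                     le_trans h.le (le_max_left c B),
                     le_trans (min_le_left sc u) hscs.le,
                     le_trans hsu.le (le_max_right sc u)⟩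
              · rcases hα with h | h
                · exact hal.1 h
                · exact hal.2 h
              · exact hal.1 hα
              · exact hal.2 hα
          · have hi0 : i' ≠ 0 := by
              intro h
              rw [h, T.grp_root] at hag
              exact hag (Finset.mem_univ a)
            obtain ⟨i0, rfl⟩ : ∃ i0, i' = i0 + 1 :=
              ⟨i' - 1, (Nat.succ_pred_eq_of_pos (Nat.pos_of_ne_zero hi0)).symm⟩
            have haL : rb T (i0+1) χ < a := by
              by_contra hcon
              push_neg at hcon
              exact hag ((mem_grp_iff T).mpr
                ⟨le_trans ((mem_grp_iff T).mp hcg).1 hlt.le, hcon⟩)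
            have hLc : c ≤ rb T (i0+1) χ := ((mem_grp_iff T).mp hcg).2
            have hLne : rb T (i0+1) χ ≠ c := by
              intro h
              apply hnbse
              have h1 := (bdry_mem_level T u χ P0 i0).2
              rw [h] at h1
              exact subset_bse T u χ (i0+1+1) _ h1
            exact wit (rb T (i0+1) χ) u (bdryP i0 (by omega)).2 (neS _ u (by omega))
              (neC _ u hLne) hLc haL.le hsu.le le_rfl

end GGsat
namespace GGsat

lemma arbsat_final {n m : ℕ} (T : GAT n) (x : Fin m → Fin n) : ArbSat (gg T x m) := by
  intro p hp q hq hx hy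
  by_contra hcon
  have hE : ∀ z ∈ gg T x m, z ≠ p → z ≠ q →
      ¬(min p.1 q.1 ≤ z.1 ∧ z.1 ≤ max p.1 q.1 ∧
        min p.2 q.2 ≤ z.2 ∧ z.2 ≤ max p.2 q.2) := by
    intro z hz h1 h2 hb
    exact hcon ⟨z, hz, h1, h2, hb.1, hb.2.1, hb.2.2.1, hb.2.2.2⟩
  obtain ⟨a, s⟩ := p
  obtain ⟨c, u⟩ := q
  simp only at hx hy hE
  rcases Nat.lt_trichotomy s u with h | h | h
  · exact unsat_false T x hp hq h hx
      (fun z hz h1 h2 hb => hE z hz h1 h2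
        ⟨hb.1, hb.2.1, le_trans (min_le_left s u) hb.2.2.1,
         le_trans hb.2.2.2 (le_max_right s u)⟩)
  · exact hy h
  · exact unsat_false T x hq hp h (Ne.symm hx)
      (fun z hz h1 h2 hb => hE z hz h2 h1
        ⟨by rw [min_comm]; exact hb.1, by rw [max_comm]; exact hb.2.1,
         le_trans (min_le_right s u) hb.2.2.1,
         le_trans hb.2.2.2 (le_max_left s u)⟩)

end GGsat

/-- For every group access tree `T` over `[n]` and every access sequence
`X ∈ [n]^m`, the point set produced by GGreedy on `X` — the union of
`X_p = {(x_t, t)}` with all points added by GGreedy — is arborally satisfied. -/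
theorem stmt15 (n m : ℕ) (T : GAT n) (x : Fin m → Fin n) :
    ArbSat (ggFinal T x) := by
  exact GGsat.arbsat_final T x
end
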